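/- arXiv:2007.06964 — 3 statements merged into one kernel-verified Lean document; each statement's English description precedes it below -/
import Mathlib

section
/- Push-forward representation yields solutions: Assume v : [0,1]×ℝ^d → ℝ^d and g : [0,1]×ℝ^d → ℝ are Borel maps satisfying ∫₀¹ (sup_{x∈ℝ^d}|v(t,x)| + Lip(v(t,·),ℝ^d)) dt < ∞และ ∫₀¹ (sup_{x∈ℝ^d}|g(t,x)| + Lip(g(t,·),ℝ^d)) dt < ∞. Let ρ₀ ∈ M⁺(ℝ^d), let X_x denote the unique maximal solution of X'(t) = v(t,X(t)), X(0) = x, defined on a maximal interval of length τ(x), and suppose there exists t̄ ∈ (0,1] such that τ(x) > t̄ for ρ₀-a.e. x ∈ ℝ^d. Then the map t ↦ ρ_t := (X_x(t))_#( ρ₀ · e^{∫₀^t g(s,X_x(s)) ds} ) (push-forward in the space variable) is a narrowly continuous solution of ∂_t ρ_t + div(v ρ_t) = g ρ_t in (0,t̄)×ℝ^d in the distributional sense. -/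
open MeasureTheory Set Filter Topology
open scoped ENNReal NNReal

noncomputable section

namespace Paper

abbrev Euc (d : ℕ) : Type := EuclideanSpace ℝ (Fin d)

abbrev XX (d : ℕ) : Type := ℝ × Euc d

variable {d : ℕ}

/-- `Ω` is the closure of a bounded domain (a nonempty bounded open connected set). -/
def IsClosureOfBoundedDomain (Ω : Set (Euc d)) : Prop :=
  ∃ U : Set (Euc d), IsOpen U ∧ U.Nonempty ∧ IsConnected U ∧
    Bornology.IsBounded U ∧ Ω = closure U

/-- `Ω` is the closure of a bounded convex domain. -/
def IsClosureOfBoundedConvexDomain (Ω : Set (Euc d)) : Prop :=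
  ∃ U : Set (Euc d), IsOpen U ∧ U.Nonempty ∧ Convex ℝ U ∧
    Bornology.IsBounded U ∧ Ω = closure U

/-- clamping of `ℝ` onto `[0,1]`. -/
def clamp (t : ℝ) : ℝ := max 0 (min 1 t)

/-- `t ↦ ρ t` is a narrowly continuous curve (on `[0,1]`) of finite positive
measures concentrated on `Ω`, i.e. an element of `C_w([0,1]; M⁺(Ω))`. -/
def NarrowCurve (Ω : Set (Euc d)) (ρ : ℝ → Measure (Euc d)) : Prop :=
  (∀ t ∈ Icc (0:ℝ) 1, ρ t Ωᶜ = 0 ∧ ρ t Set.univ ≠ ⊤) ∧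
  (∀ φ : Euc d → ℝ, Continuous φ →
      ContinuousOn (fun t => ∫ x, φ x ∂(ρ t)) (Icc (0:ℝ) 1))

/-- Test functions for the continuity equation on `X_Ω = (0,1) × Ω` (no-flux form:
compact support in time, free at the spatial boundary). -/
def IsTest (φ : XX d → ℝ) : Prop :=
  ContDiff ℝ (⊤ : ℕ∞) φ ∧ HasCompactSupport φ ∧
    tsupport φ ⊆ Ioo (0:ℝ) 1 ×ˢ (Set.univ : Set (Euc d))

/-- Distributional solution of `∂ₜ ρ + div (v ρ) = g ρ`. -/
def SolvesCE (ρ : ℝ → Measure (Euc d)) (v : XX d → Euc d) (g : XX d → ℝ) : Prop :=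
  ∀ φ : XX d → ℝ, IsTest φ →
    (∫ t in Ioo (0:ℝ) 1,
      ∫ x, (fderiv ℝ φ (t, x) (1, v (t, x)) + φ (t, x) * g (t, x)) ∂(ρ t)) = 0

/-- The Hellinger–Kantorovich energy `∫₀¹ ∫ (|v|² + g²) dρ_t dt`. -/
def EnergyVG (ρ : ℝ → Measure (Euc d)) (v : XX d → Euc d) (g : XX d → ℝ) : ℝ≥0∞ :=
  ∫⁻ t in Ioo (0:ℝ) 1, ∫⁻ x, ENNReal.ofReal (‖v (t, x)‖ ^ 2 + g (t, x) ^ 2) ∂(ρ t)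

/-- The class `D_{v,g}` of finite-energy narrowly continuous solutions. -/
def Dvg (Ω : Set (Euc d)) (v : XX d → Euc d) (g : XX d → ℝ)
    (ρ : ℝ → Measure (Euc d)) : Prop :=
  NarrowCurve Ω ρ ∧ SolvesCE ρ v g ∧ EnergyVG ρ v g < ⊤

/-- total variation `‖ρ‖_{M(X_Ω)}` of `ρ = dt ⊗ ρ_t`. -/
def TVcurve (ρ : ℝ → Measure (Euc d)) : ℝ≥0∞ :=
  ∫⁻ t in Ioo (0:ℝ) 1, ρ t Set.univ

/-- The cone `𝒞_V = {h δ_γ : h ≥ 0, γ ∈ V}` of weighted Dirac masses. -/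
def coneSet (V : Set (Euc d)) : Set (Measure (Euc d)) :=
  {μ | ∃ (a : ℝ) (x : Euc d), 0 ≤ a ∧ x ∈ V ∧ μ = ENNReal.ofReal a • Measure.dirac x}

/-- The space `𝒮_V` of narrowly continuous curves `[0,1] → 𝒞_V`
(extended to `ℝ` by clamping). -/
structure SCurve (V : Set (Euc d)) where
  toFun : ℝ → Measure (Euc d)
  clamped : ∀ t, toFun t = toFun (clamp t)
  cone : ∀ t, toFun t ∈ coneSet V
  narrow : ∀ φ : Euc d → ℝ, Continuous φ → Continuous fun t => ∫ x, φ x ∂(toFun t)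

/-- The flat distance `D_F` between measures. -/
def flatDist (μ ν : Measure (Euc d)) : ℝ :=
  sSup {r : ℝ | ∃ φ : Euc d → ℝ, Continuous φ ∧ (∀ x, |φ x| ≤ 1) ∧ LipschitzWith 1 φ ∧
        r = (∫ x, φ x ∂μ) - ∫ x, φ x ∂ν}

/-- The supremum distance `D` on `𝒮_V`. -/
def Ddist {V : Set (Euc d)} (η₁ η₂ : SCurve V) : ℝ :=
  sSup {r : ℝ | ∃ t ∈ Icc (0:ℝ) 1, r = flatDist (η₁.toFun t) (η₂.toFun t)}

/-- The topology of `(𝒮_V, D)`, generated by the open `D`-balls. -/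
def Stop (V : Set (Euc d)) : TopologicalSpace (SCurve V) :=
  TopologicalSpace.generateFrom
    {s | ∃ (η₀ : SCurve V) (ε : ℝ), 0 < ε ∧ s = {η | Ddist η₀ η < ε}}

/-- The Borel σ-algebra of `(𝒮_V, D)`. -/
def Sborel (V : Set (Euc d)) : MeasurableSpace (SCurve V) := @borel _ (Stop V)

instance (V : Set (Euc d)) : MeasurableSpace (SCurve V) := Sborel V

/-- `‖h‖_∞` for a curve `ρ_t = h(t) δ_{γ(t)} ∈ 𝒮_V`. -/
def supMass {V : Set (Euc d)} (η : SCurve V) : ℝ≥0∞ :=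
  ⨆ t ∈ Icc (0:ℝ) 1, η.toFun t Set.univ

/-- `AC²[0,1]`: absolutely continuous on `[0,1]` with a.e. derivative in `L²`. -/
def AC2 {F : Type*} [NormedAddCommGroup F] [NormedSpace ℝ F] (f : ℝ → F) : Prop :=
  ∃ f' : ℝ → F, IntegrableOn f' (Icc (0:ℝ) 1) ∧
    IntegrableOn (fun t => ‖f' t‖ ^ 2) (Icc (0:ℝ) 1) ∧
    ∀ t ∈ Icc (0:ℝ) 1, f t = f 0 + ∫ s in (0:ℝ)..t, f' s

/-- `(γ, h)` represents the curve `η ∈ 𝒮_V`, i.e. `η_t = h(t) δ_{γ(t)}` on `[0,1]`. -/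
def Represents {V : Set (Euc d)} (η : SCurve V) (γ : ℝ → Euc d) (h : ℝ → ℝ) : Prop :=
  ∀ t ∈ Icc (0:ℝ) 1, 0 ≤ h t ∧ γ t ∈ V ∧
    η.toFun t = ENNReal.ofReal (h t) • Measure.dirac (γ t)

/-- The set `H_V ⊆ 𝒮_V` of curves `h(t)δ_{γ(t)}` with `h, √h ∈ AC²[0,1]`,
`√h γ ∈ AC²([0,1];ℝ^d)`. -/
def MemH (V : Set (Euc d)) (η : SCurve V) : Prop :=
  ∃ (γ : ℝ → Euc d) (h : ℝ → ℝ), Represents η γ h ∧ AC2 h ∧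
    AC2 (fun t => Real.sqrt (h t)) ∧ AC2 (fun t => Real.sqrt (h t) • γ t)

/-- The set `H_V^{v,g}`: curves in `H_V` solving the characteristic system
`γ' = v(t,γ)` a.e. on `{h>0}` and `h' = g(t,γ) h` a.e. on `(0,1)`. -/
def MemHvg (V : Set (Euc d)) (v : XX d → Euc d) (g : XX d → ℝ) (η : SCurve V) : Prop :=
  ∃ (γ : ℝ → Euc d) (h : ℝ → ℝ), Represents η γ h ∧ AC2 h ∧
    AC2 (fun t => Real.sqrt (h t)) ∧ AC2 (fun t => Real.sqrt (h t) • γ t) ∧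
    (∀ᵐ t ∂(volume.restrict {t | t ∈ Ioo (0:ℝ) 1 ∧ 0 < h t}),
        HasDerivAt γ (v (t, γ t)) t) ∧
    (∀ᵐ t ∂(volume.restrict (Ioo (0:ℝ) 1)),
        HasDerivAt h (g (t, γ t) * h t) t)

/-- The set `𝒮*_V` of curves whose positivity set `{h > 0}` is `[0,1] ∩ (-∞, τ)`. -/
def MemSstar {V : Set (Euc d)} (η : SCurve V) : Prop :=
  ∃ τ : ℝ, {t | t ∈ Icc (0:ℝ) 1 ∧ η.toFun t Set.univ ≠ 0} = Icc (0:ℝ) 1 ∩ Iio τ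

/-- The vanishing time `τ(γ,h) = min { t ∈ [0,1] : h(t) = 0 }` (`∞` if none). -/
def tauS {V : Set (Euc d)} (η : SCurve V) : ℝ≥0∞ :=
  sInf {c : ℝ≥0∞ | ∃ t ∈ Icc (0:ℝ) 1, η.toFun t Set.univ = 0 ∧ c = ENNReal.ofReal t}


open Classical in
/-- The integrand `Ψ_δ(t,x,y)`. -/
def Psi (δ : ℝ) (t : ℝ) (x : Euc d) (y : ℝ) : ℝ≥0∞ :=
  if 0 < t then ENNReal.ofReal ((‖x‖ ^ 2 + δ ^ 2 * y ^ 2) / (2 * t))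
  else if t = 0 ∧ x = 0 ∧ y = 0 then 0 else ⊤

/-- `u` is a density of the signed measure `σ` with respect to `lam`. -/
def IsDensityS (σ : SignedMeasure (XX d)) (lam : Measure (XX d)) (u : XX d → ℝ) : Prop :=
  ∀ s : Set (XX d), MeasurableSet s → σ s = ∫ x in s, u x ∂lam

/-- `w` is a density of the vector measure `m` with respect to `lam`. -/
def IsDensityV (m : VectorMeasure (XX d) (Euc d)) (lam : Measure (XX d))
    (w : XX d → Euc d) : Prop :=
  ∀ s : Set (XX d), MeasurableSet s → m s = ∫ x in s, w x ∂lam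

/-- `r` is a density of the positive measure `P` with respect to `lam`. -/
def IsDensityP (P : Measure (XX d)) (lam : Measure (XX d)) (r : XX d → ℝ) : Prop :=
  ∀ s : Set (XX d), MeasurableSet s → P s = ∫⁻ x in s, ENNReal.ofReal (r x) ∂lam

/-- `(P, m, μ)` is a measure solution of `∂ₜ ρ + div m = μ` (with `P` positive). -/
def SolvesCEMeas (P : Measure (XX d)) (m : VectorMeasure (XX d) (Euc d))
    (μ : SignedMeasure (XX d)) : Prop :=
  ∀ (lam : Measure (XX d)), IsFiniteMeasure lam →
    ∀ (w : XX d → Euc d) (u : XX d → ℝ), Measurable w → Measurable u →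
      IsDensityV m lam w → IsDensityS μ lam u →
      ∀ φ : XX d → ℝ, IsTest φ →
        ((∫ x, fderiv ℝ φ x ((1:ℝ), (0 : Euc d)) ∂P) +
          (∫ x, fderiv ℝ φ x ((0:ℝ), w x) ∂lam) + ∫ x, φ x * u x ∂lam) = 0

/-- The Wasserstein–Fisher–Rao energy `B_δ(ρ,m,μ)` for a positive `ρ`. -/
def BdeltaMeas (δ : ℝ) (P : Measure (XX d)) (m : VectorMeasure (XX d) (Euc d))
    (μ : SignedMeasure (XX d)) : ℝ≥0∞ :=
  sInf {c : ℝ≥0∞ | ∃ lam : Measure (XX d), IsFiniteMeasure lam ∧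
    ∃ (r : XX d → ℝ) (w : XX d → Euc d) (u : XX d → ℝ),
      Measurable r ∧ Measurable w ∧ Measurable u ∧ (∀ x, 0 ≤ r x) ∧
      IsDensityP P lam r ∧ IsDensityV m lam w ∧ IsDensityS μ lam u ∧
      c = ∫⁻ x, Psi δ (r x) (w x) (u x) ∂lam}

open Classical in
/-- The coercive energy `J_{α,β,δ}(ρ,m,μ)` for a positive `ρ`. -/
def JMeas (α β δ : ℝ) (P : Measure (XX d)) (m : VectorMeasure (XX d) (Euc d))
    (μ : SignedMeasure (XX d)) : ℝ≥0∞ :=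
  if SolvesCEMeas P m μ then
    ENNReal.ofReal β * BdeltaMeas δ P m μ + ENNReal.ofReal α * P Set.univ
  else ⊤

/-- `(ρ, m, μ)` is a measure solution of `∂ₜ ρ + div m = μ` (signed case). -/
def SolvesCESigned (ρ : SignedMeasure (XX d)) (m : VectorMeasure (XX d) (Euc d))
    (μ : SignedMeasure (XX d)) : Prop :=
  ∀ (lam : Measure (XX d)), IsFiniteMeasure lam →
    ∀ (r : XX d → ℝ) (w : XX d → Euc d) (u : XX d → ℝ),
      Measurable r → Measurable w → Measurable u →
      IsDensityS ρ lam r → IsDensityV m lam w → IsDensityS μ lam u →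
      ∀ φ : XX d → ℝ, IsTest φ →
        (∫ x, (fderiv ℝ φ x ((1:ℝ), (0 : Euc d)) * r x
          + fderiv ℝ φ x ((0:ℝ), w x) + φ x * u x) ∂lam) = 0

/-- The Wasserstein–Fisher–Rao energy `B_δ(ρ,m,μ)`, signed case. -/
def BdeltaSigned (δ : ℝ) (ρ : SignedMeasure (XX d)) (m : VectorMeasure (XX d) (Euc d))
    (μ : SignedMeasure (XX d)) : ℝ≥0∞ :=
  sInf {c : ℝ≥0∞ | ∃ lam : Measure (XX d), IsFiniteMeasure lam ∧
    ∃ (r : XX d → ℝ) (w : XX d → Euc d) (u : XX d → ℝ),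
      Measurable r ∧ Measurable w ∧ Measurable u ∧
      IsDensityS ρ lam r ∧ IsDensityV m lam w ∧ IsDensityS μ lam u ∧
      c = ∫⁻ x, Psi δ (r x) (w x) (u x) ∂lam}

open Classical in
/-- The coercive energy `J_{α,β,δ}(ρ,m,μ)`, signed case. -/
def JSigned (α β δ : ℝ) (ρ : SignedMeasure (XX d)) (m : VectorMeasure (XX d) (Euc d))
    (μ : SignedMeasure (XX d)) : ℝ≥0∞ :=
  if SolvesCESigned ρ m μ then
    ENNReal.ofReal β * BdeltaSigned δ ρ m μ
      + ENNReal.ofReal α * ρ.totalVariation Set.univ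
  else ⊤

/-- A signed measure on `X = ℝ × ℝ^d` is concentrated on `X_Ω = (0,1) × Ω`. -/
def ConcS (Ω : Set (Euc d)) (ρ : SignedMeasure (XX d)) : Prop :=
  ∀ s : Set (XX d), MeasurableSet s → s ⊆ (Ioo (0:ℝ) 1 ×ˢ Ω)ᶜ → ρ s = 0

/-- A vector measure on `X = ℝ × ℝ^d` is concentrated on `X_Ω = (0,1) × Ω`. -/
def ConcV (Ω : Set (Euc d)) (m : VectorMeasure (XX d) (Euc d)) : Prop :=
  ∀ s : Set (XX d), MeasurableSet s → s ⊆ (Ioo (0:ℝ) 1 ×ˢ Ω)ᶜ → m s = 0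

/-- Integral of `φ` against a signed measure. -/
def sInt {α : Type*} [MeasurableSpace α] (σ : SignedMeasure α) (φ : α → ℝ) : ℝ :=
  (∫ x, φ x ∂σ.toJordanDecomposition.posPart) -
    ∫ x, φ x ∂σ.toJordanDecomposition.negPart

/-- Triples `(ρ, m, μ) ∈ M(X_Ω) × M(X_Ω; ℝ^d) × M(X_Ω)`. -/
abbrev Mtriple (d : ℕ) : Type :=
  SignedMeasure (XX d) × VectorMeasure (XX d) (Euc d) × SignedMeasure (XX d)

/-- `P` is the measure `dt ⊗ ρ_t` associated with the curve `η ∈ 𝒮_V`. -/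
def CurveMeasure {V : Set (Euc d)} (η : SCurve V) (P : Measure (XX d)) : Prop :=
  ∀ s : Set (XX d), MeasurableSet s →
    P s = ∫⁻ t in Ioo (0:ℝ) 1, η.toFun t {x | (t, x) ∈ s}

/-- `h'` and `γ'` are the a.e. derivatives of `h` on `(0,1)` and of `γ` on `{h>0}`. -/
def HasAEDerivs (γ : ℝ → Euc d) (h : ℝ → ℝ) (γ' : ℝ → Euc d) (h' : ℝ → ℝ) : Prop :=
  (∀ᵐ t ∂(volume.restrict (Ioo (0:ℝ) 1)), HasDerivAt h (h' t) t) ∧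
  (∀ᵐ t ∂(volume.restrict {t | t ∈ Ioo (0:ℝ) 1 ∧ 0 < h t}), HasDerivAt γ (γ' t) t)

/-- The triple `p = (ρ, m, μ)` is of characteristic form
`ρ = h dt ⊗ δ_γ`, `m = γ' ρ`, `μ = h' dt ⊗ δ_γ` with the regularity of `H_Ω`. -/
def CharRepr (Ω : Set (Euc d)) (γ : ℝ → Euc d) (h : ℝ → ℝ) (γ' : ℝ → Euc d)
    (h' : ℝ → ℝ) (p : Mtriple d) : Prop :=
  (∀ t ∈ Icc (0:ℝ) 1, 0 ≤ h t ∧ γ t ∈ Ω) ∧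
  AC2 h ∧ AC2 (fun t => Real.sqrt (h t)) ∧ AC2 (fun t => Real.sqrt (h t) • γ t) ∧
  (∀ φ : Euc d → ℝ, Continuous φ →
      ContinuousOn (fun t => h t * φ (γ t)) (Icc (0:ℝ) 1)) ∧
  HasAEDerivs γ h γ' h' ∧
  (∀ s : Set (XX d), MeasurableSet s →
      p.1 s = ∫ t in Ioo (0:ℝ) 1, Set.indicator {u : ℝ | (u, γ u) ∈ s} h t) ∧
  (∀ s : Set (XX d), MeasurableSet s →
      p.2.1 s = ∫ t in Ioo (0:ℝ) 1,
        Set.indicator {u : ℝ | (u, γ u) ∈ s} (fun u => h u • γ' u) t) ∧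
  (∀ s : Set (XX d), MeasurableSet s →
      p.2.2 s = ∫ t in Ioo (0:ℝ) 1, Set.indicator {u : ℝ | (u, γ u) ∈ s} h' t)

/-- The set `𝒞` of extremal characteristic triples. -/
def MemC (α β δ : ℝ) (Ω : Set (Euc d)) (p : Mtriple d) : Prop :=
  ∃ (γ : ℝ → Euc d) (h : ℝ → ℝ) (γ' : ℝ → Euc d) (h' : ℝ → ℝ),
    CharRepr Ω γ h γ' h' p ∧
    IsPreconnected {t | t ∈ Icc (0:ℝ) 1 ∧ 0 < h t} ∧
    JSigned α β δ p.1 p.2.1 p.2.2 = 1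


/-- Curves in `C_w([0,1]; M(Ω))`: narrowly continuous curves of signed measures
concentrated on `Ω`, extended to `ℝ` by clamping. -/
def IsCwCurve (Ω : Set (Euc d)) (f : ℝ → SignedMeasure (Euc d)) : Prop :=
  (∀ t, f t = f (clamp t)) ∧
  (∀ t, ∀ s : Set (Euc d), MeasurableSet s → s ⊆ Ωᶜ → f t s = 0) ∧
  (∀ φ : Euc d → ℝ, Continuous φ → Continuous fun t => sInt (f t) φ)

/-- `r` is a density with respect to `lam` of the measure `dt ⊗ f_t` on `X`. -/
def CwDensity (f : ℝ → SignedMeasure (Euc d)) (lam : Measure (XX d))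
    (r : XX d → ℝ) : Prop :=
  ∀ s : Set (XX d), MeasurableSet s →
    (∫ t in Ioo (0:ℝ) 1,
        sInt (f t) ({x : Euc d | (t, x) ∈ s}.indicator fun _ => (1:ℝ)))
      = ∫ x in s, r x ∂lam

/-- `(f, m, μ)` is a measure solution of `∂ₜ ρ + div m = μ`, `f` a curve. -/
def SolvesCECw (f : ℝ → SignedMeasure (Euc d)) (m : VectorMeasure (XX d) (Euc d))
    (μ : SignedMeasure (XX d)) : Prop :=
  ∀ (lam : Measure (XX d)), IsFiniteMeasure lam →
    ∀ (w : XX d → Euc d) (u : XX d → ℝ), Measurable w → Measurable u →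
      IsDensityV m lam w → IsDensityS μ lam u →
      ∀ φ : XX d → ℝ, IsTest φ →
        ((∫ t in Ioo (0:ℝ) 1, sInt (f t) fun x => fderiv ℝ φ (t, x) ((1:ℝ), (0 : Euc d)))
          + (∫ x, fderiv ℝ φ x ((0:ℝ), w x) ∂lam) + ∫ x, φ x * u x ∂lam) = 0

/-- `B_δ(dt ⊗ f_t, m, μ)`. -/
def BdeltaCw (δ : ℝ) (f : ℝ → SignedMeasure (Euc d)) (m : VectorMeasure (XX d) (Euc d))
    (μ : SignedMeasure (XX d)) : ℝ≥0∞ :=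
  sInf {c : ℝ≥0∞ | ∃ lam : Measure (XX d), IsFiniteMeasure lam ∧
    ∃ (r : XX d → ℝ) (w : XX d → Euc d) (u : XX d → ℝ),
      Measurable r ∧ Measurable w ∧ Measurable u ∧
      CwDensity f lam r ∧ IsDensityV m lam w ∧ IsDensityS μ lam u ∧
      c = ∫⁻ x, Psi δ (r x) (w x) (u x) ∂lam}

/-- `‖dt ⊗ f_t‖_{M(X_Ω)}`. -/
def TVCw (f : ℝ → SignedMeasure (Euc d)) : ℝ≥0∞ :=
  ∫⁻ t in Ioo (0:ℝ) 1, (f t).totalVariation Set.univ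

open Classical in
/-- `J_{α,β,δ}(dt ⊗ f_t, m, μ)`. -/
def JCw (α β δ : ℝ) (f : ℝ → SignedMeasure (Euc d)) (m : VectorMeasure (XX d) (Euc d))
    (μ : SignedMeasure (XX d)) : ℝ≥0∞ :=
  if SolvesCECw f m μ then
    ENNReal.ofReal β * BdeltaCw δ f m μ + ENNReal.ofReal α * TVCw f
  else ⊤

/-- The set `𝒞` in curve form: `(f, m, μ)` with `f_t = h(t) δ_{γ(t)}`,
`m = h γ' dt ⊗ δ_γ`, `μ = h' dt ⊗ δ_γ`, with `H_Ω`-regularity, connected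
positivity set and unit energy. -/
def MemCCw (α β δ : ℝ) (Ω : Set (Euc d)) (f : ℝ → SignedMeasure (Euc d))
    (m : VectorMeasure (XX d) (Euc d)) (μ : SignedMeasure (XX d)) : Prop :=
  ∃ (γ : ℝ → Euc d) (h : ℝ → ℝ) (γ' : ℝ → Euc d) (h' : ℝ → ℝ),
    (∀ t ∈ Icc (0:ℝ) 1, 0 ≤ h t ∧ γ t ∈ Ω) ∧
    AC2 h ∧ AC2 (fun t => Real.sqrt (h t)) ∧ AC2 (fun t => Real.sqrt (h t) • γ t) ∧
    (∀ φ : Euc d → ℝ, Continuous φ →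
        ContinuousOn (fun t => h t * φ (γ t)) (Icc (0:ℝ) 1)) ∧
    HasAEDerivs γ h γ' h' ∧
    (∀ t, f t = h (clamp t) • (Measure.dirac (γ (clamp t))).toSignedMeasure) ∧
    (∀ s : Set (XX d), MeasurableSet s →
        m s = ∫ t in Ioo (0:ℝ) 1,
          Set.indicator {u : ℝ | (u, γ u) ∈ s} (fun u => h u • γ' u) t) ∧
    (∀ s : Set (XX d), MeasurableSet s →
        μ s = ∫ t in Ioo (0:ℝ) 1, Set.indicator {u : ℝ | (u, γ u) ∈ s} h' t) ∧
    IsPreconnected {t | t ∈ Icc (0:ℝ) 1 ∧ 0 < h t} ∧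
    JCw α β δ f m μ = 1

/-- The mollified density `ρ_t ∗ ξ_ε + ε χ_V`. -/
def mollDens (V : Set (Euc d)) (ρ : ℝ → Measure (Euc d)) (ξ : Euc d → ℝ) (ε : ℝ)
    (t : ℝ) (x : Euc d) : ℝ :=
  (∫ y, (ε ^ d)⁻¹ * ξ (ε⁻¹ • (x - y)) ∂(ρ t)) + ε * V.indicator (fun _ => (1:ℝ)) x

/-- The mollified measure `ρ_t^ε = (ρ_t ∗ ξ_ε + ε χ_V) dx`. -/
def mollRho (V : Set (Euc d)) (ρ : ℝ → Measure (Euc d)) (ξ : Euc d → ℝ) (ε : ℝ) :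
    ℝ → Measure (Euc d) :=
  fun t => volume.withDensity fun x => ENNReal.ofReal (mollDens V ρ ξ ε t x)

open Classical in
/-- The mollified velocity field `v^ε = ((v ρ_t) ∗ ξ_ε) / ρ_t^ε`. -/
def mollV (V : Set (Euc d)) (ρ : ℝ → Measure (Euc d)) (v : XX d → Euc d)
    (ξ : Euc d → ℝ) (ε : ℝ) : XX d → Euc d :=
  fun p => if mollDens V ρ ξ ε p.1 p.2 = 0 then 0 else
    (mollDens V ρ ξ ε p.1 p.2)⁻¹ •
      ∫ y, ((ε ^ d)⁻¹ * ξ (ε⁻¹ • (p.2 - y))) • v (p.1, y) ∂(ρ p.1)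

open Classical in
/-- The mollified growth field `g^ε = ((g ρ_t) ∗ ξ_ε) / ρ_t^ε`. -/
def mollG (V : Set (Euc d)) (ρ : ℝ → Measure (Euc d)) (g : XX d → ℝ)
    (ξ : Euc d → ℝ) (ε : ℝ) : XX d → ℝ :=
  fun p => if mollDens V ρ ξ ε p.1 p.2 = 0 then 0 else
    (mollDens V ρ ξ ε p.1 p.2)⁻¹ *
      ∫ y, ((ε ^ d)⁻¹ * ξ (ε⁻¹ • (p.2 - y))) * g (p.1, y) ∂(ρ p.1)


/-- Chain-rule FTC for C¹ functions along absolutely continuous curves. -/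
theorem ftc_chain {E : Type*} [NormedAddCommGroup E] [NormedSpace ℝ E] [CompleteSpace E] [ProperSpace E]
    (Φ : ℝ × E → ℝ) (hΦ : ContDiff ℝ 1 Φ) (a b : ℝ) (hab : a ≤ b)
    (w : ℝ → E) (hw : IntegrableOn w (Icc a b))
    (c : ℝ → E) (hc : ∀ t ∈ Icc a b, c t = c a + ∫ s in a..t, w s) :
    ∫ s in a..b, (fderiv ℝ Φ (s, c s)) (1, w s) = Φ (b, c b) - Φ (a, c a) := by
  classical
  -- replace w by its global extension W
  set W : ℝ → E := (Icc a b).indicator w with hWdef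
  have hW : Integrable W := hw.integrable_indicator measurableSet_Icc
  have hWeq : ∀ s ∈ Icc a b, W s = w s := fun s hs => indicator_of_mem hs w
  have hPrim : ∀ t ∈ Icc a b, (∫ s in a..t, W s) = ∫ s in a..t, w s := by
    intro t ht
    refine intervalIntegral.integral_congr (fun s hs => ?_)
    apply hWeq
    have : uIcc a t ⊆ Icc a b := by
      rw [uIcc_of_le ht.1]
      exact Icc_subset_Icc le_rfl ht.2
    exact this hs
  have hcW : ∀ t ∈ Icc a b, c t = c a + ∫ s in a..t, W s := by
    intro t ht; rw [hPrim t ht]; exact hc t ht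
  -- continuity of c on Icc a b
  have hWint : ∀ a' b' : ℝ, IntervalIntegrable W volume a' b' := fun a' b' =>
    hW.intervalIntegrable
  have hPc : Continuous fun t => ∫ s in a..t, W s :=
    intervalIntegral.continuous_primitive hWint a
  have hccont : ContinuousOn c (Icc a b) :=
    (continuous_const.add hPc).continuousOn.congr hcW
  -- the compact neighbourhood
  have hKc : IsCompact (c '' Icc a b) := isCompact_Icc.image_of_continuousOn hccont
  set N : Set E := Metric.cthickening 1 (c '' Icc a b) with hNdef
  have hNcomp : IsCompact N := hKc.cthickening
  have hfd_cont : Continuous (fderiv ℝ Φ) := hΦ.continuous_fderiv one_ne_zero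
  obtain ⟨C, hC⟩ := (isCompact_Icc.prod hNcomp).exists_bound_of_continuousOn
    (hfd_cont.continuousOn (s := Icc a b ×ˢ N)) (f := fderiv ℝ Φ)
  have hcaN : ∀ t ∈ Icc a b, c t ∈ N := fun t ht =>
    Metric.self_subset_cthickening _ (mem_image_of_mem c ht)
  have hC0 : 0 ≤ C :=
    le_trans (norm_nonneg _) (hC (a, c a) ⟨left_mem_Icc.2 hab, hcaN a (left_mem_Icc.2 hab)⟩)
  -- approximating sequence
  have hgn : ∀ n : ℕ, ∃ gn : ℝ → E, HasCompactSupport gn ∧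
      (∫ x, ‖W x - gn x‖) ≤ 1 / (n + 1) ∧ Continuous gn ∧ Integrable gn := by
    intro n
    exact hW.exists_hasCompactSupport_integral_sub_le (by positivity)
  choose gn hgn_supp hgn_close hgn_cont hgn_int using hgn
  set cn : ℕ → ℝ → E := fun n t => c a + ∫ s in a..t, gn n s with hcndef
  have hgn_ii : ∀ n a' b', IntervalIntegrable (gn n) volume a' b' := fun n a' b' =>
    ((hgn_cont n).intervalIntegrable a' b')
  have hdiff_int : ∀ n, Integrable (fun s => ‖W s - gn n s‖) := fun n =>
    (hW.sub (hgn_int n)).norm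
  -- uniform closeness of cn to c
  have hclose : ∀ n, ∀ t ∈ Icc a b, ‖cn n t - c t‖ ≤ 1 / (n + 1) := by
    intro n t ht
    have h1 : cn n t - c t = ∫ s in a..t, (gn n s - W s) := by
      rw [hcndef]
      simp only [hcW t ht]
      rw [intervalIntegral.integral_sub (hgn_ii n a t) (hWint a t)]
      abel
    rw [h1]
    calc ‖∫ s in a..t, (gn n s - W s)‖ ≤ ∫ s in a..t, ‖gn n s - W s‖ :=
          intervalIntegral.norm_integral_le_integral_norm ht.1
      _ ≤ ∫ s, ‖gn n s - W s‖ := by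
          rw [intervalIntegral.integral_of_le ht.1]
          exact setIntegral_le_integral ((hgn_int n).sub hW).norm
            (Eventually.of_forall fun s => norm_nonneg _)
      _ ≤ 1 / (n + 1) := by
          have : (fun s => ‖gn n s - W s‖) = fun s => ‖W s - gn n s‖ := by
            funext s; rw [norm_sub_rev]
          rw [this]; exact hgn_close n
  have heps_le_one : ∀ n : ℕ, 1 / ((n : ℝ) + 1) ≤ 1 := by
    intro n
    rw [div_le_one (by positivity)]
    linarith [Nat.cast_nonneg (α := ℝ) n]
  have hmemN : ∀ n, ∀ t ∈ Icc a b, cn n t ∈ N := by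
    intro n t ht
    refine Metric.mem_cthickening_of_dist_le _ (c t) _ _ (mem_image_of_mem c ht) ?_
    rw [dist_eq_norm]
    exact le_trans (hclose n t ht) (heps_le_one n)
  -- derivative of the approximations
  have hcn_cont : ∀ n, Continuous (cn n) := fun n =>
    continuous_const.add (intervalIntegral.continuous_primitive (hgn_ii n) a)
  have hcn_deriv : ∀ n t, HasDerivAt (cn n) (gn n t) t := by
    intro n t
    exact (intervalIntegral.integral_hasDerivAt_right (hgn_ii n a t)
      ((hgn_cont n).stronglyMeasurable.stronglyMeasurableAtFilter)
      (hgn_cont n).continuousAt).const_add (c a)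
  have hFn_deriv : ∀ n t, HasDerivAt (fun t => Φ (t, cn n t))
      ((fderiv ℝ Φ (t, cn n t)) (1, gn n t)) t := by
    intro n t
    have hcurve : HasDerivAt (fun t => (t, cn n t)) (1, gn n t) t :=
      (hasDerivAt_id t).prodMk (hcn_deriv n t)
    exact ((hΦ.differentiable one_ne_zero (t, cn n t)).hasFDerivAt).comp_hasDerivAt t hcurve
  have hDn_cont : ∀ n, Continuous fun t => (fderiv ℝ Φ (t, cn n t)) (1, gn n t) := by
    intro n
    exact (hfd_cont.comp (continuous_id.prodMk (hcn_cont n))).clm_apply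
      (continuous_const.prodMk (hgn_cont n))
  have hFTCn : ∀ n, (∫ s in a..b, (fderiv ℝ Φ (s, cn n s)) (1, gn n s))
      = Φ (b, cn n b) - Φ (a, cn n a) := by
    intro n
    exact intervalIntegral.integral_eq_sub_of_hasDerivAt (fun t _ => hFn_deriv n t)
      ((hDn_cont n).intervalIntegrable a b)
  -- the limit integrand
  set D : ℝ → ℝ := fun s => (fderiv ℝ Φ (s, c s)) (1, W s) with hDdef
  set D' : ℕ → ℝ → ℝ := fun n s => (fderiv ℝ Φ (s, cn n s)) (1, W s) with hD'def
  have hInt_close : ∀ n, ∀ t ∈ Icc a b, (∫ s in a..t, ‖gn n s - W s‖) ≤ 1 / (n + 1) := by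
    intro n t ht
    calc (∫ s in a..t, ‖gn n s - W s‖) ≤ ∫ s, ‖gn n s - W s‖ := by
          rw [intervalIntegral.integral_of_le ht.1]
          exact setIntegral_le_integral ((hgn_int n).sub hW).norm
            (Eventually.of_forall fun s => norm_nonneg _)
      _ ≤ 1 / (n + 1) := by
          have : (fun s => ‖gn n s - W s‖) = fun s => ‖W s - gn n s‖ := by
            funext s; rw [norm_sub_rev]
          rw [this]; exact hgn_close n
  have haeIcc : ∀ᵐ s ∂(volume.restrict (Set.uIoc a b)), s ∈ Icc a b := by
    rw [uIoc_of_le hab]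
    filter_upwards [ae_restrict_mem measurableSet_Ioc] with s hs
    exact ⟨hs.1.le, hs.2⟩
  have hWaesm : AEStronglyMeasurable W (volume.restrict (Set.uIoc a b)) :=
    hW.aestronglyMeasurable.restrict
  haveI : SecondCountableTopologyEither ℝ (ℝ × E →L[ℝ] ℝ) := ⟨Or.inl inferInstance⟩
  have hD'meas : ∀ n, AEStronglyMeasurable (D' n) (volume.restrict (Set.uIoc a b)) := by
    intro n
    have h1 : Continuous fun s => fderiv ℝ Φ (s, cn n s) :=
      hfd_cont.comp (continuous_id.prodMk (hcn_cont n))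
    exact (isBoundedBilinearMap_apply.continuous).comp_aestronglyMeasurable
      (h1.aestronglyMeasurable.prodMk (aestronglyMeasurable_const.prodMk hWaesm))
  have hopnorm : ∀ n, ∀ s ∈ Icc a b, ‖fderiv ℝ Φ (s, cn n s)‖ ≤ C := fun n s hs =>
    hC (s, cn n s) ⟨hs, hmemN n s hs⟩
  have hpairnorm : ∀ s : ℝ, ‖((1:ℝ), W s)‖ ≤ 1 + ‖W s‖ := by
    intro s
    rw [Prod.norm_def]
    simp only [norm_one]
    exact max_le (by linarith [norm_nonneg (W s)]) (by linarith)
  have hD'bound : ∀ n, ∀ s ∈ Icc a b, ‖D' n s‖ ≤ C * (1 + ‖W s‖) := by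
    intro n s hs
    calc ‖D' n s‖ ≤ ‖fderiv ℝ Φ (s, cn n s)‖ * ‖((1:ℝ), W s)‖ :=
          ContinuousLinearMap.le_opNorm _ _
      _ ≤ C * (1 + ‖W s‖) :=
          mul_le_mul (hopnorm n s hs) (hpairnorm s) (norm_nonneg _) hC0
  have hbound_int : IntervalIntegrable (fun s => C * (1 + ‖W s‖)) volume a b :=
    ((intervalIntegrable_const.add (hW.norm.intervalIntegrable)).const_mul C)
  have htendsto_cn : ∀ t ∈ Icc a b, Tendsto (fun n => cn n t) atTop (𝓝 (c t)) := by
    intro t ht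
    rw [tendsto_iff_norm_sub_tendsto_zero]
    refine squeeze_zero (fun n => norm_nonneg _) (fun n => hclose n t ht) ?_
    exact tendsto_one_div_add_atTop_nhds_zero_nat
  have hD'tendsto : Tendsto (fun n => ∫ s in a..b, D' n s) atTop (𝓝 (∫ s in a..b, D s)) := by
    refine intervalIntegral.tendsto_integral_filter_of_dominated_convergence
      (fun s => C * (1 + ‖W s‖)) (Eventually.of_forall hD'meas) ?_ hbound_int ?_
    · refine Eventually.of_forall fun n => Eventually.of_forall fun s hs =>
        hD'bound n s ?_
      rw [uIoc_of_le hab] at hs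
      exact ⟨hs.1.le, hs.2⟩
    · refine Eventually.of_forall fun s hs => ?_
      rw [uIoc_of_le hab] at hs
      replace hs : s ∈ Icc a b := ⟨hs.1.le, hs.2⟩
      have h1 : Tendsto (fun n => fderiv ℝ Φ (s, cn n s)) atTop (𝓝 (fderiv ℝ Φ (s, c s))) :=
        (hfd_cont.continuousAt.tendsto).comp
          ((tendsto_const_nhds (x := s)).prodMk_nhds (htendsto_cn s hs))
      exact ((isBoundedBilinearMap_apply.continuous.continuousAt).tendsto).comp
        (h1.prodMk_nhds tendsto_const_nhds)
  have hD'ii : ∀ n, IntervalIntegrable (D' n) volume a b := by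
    intro n
    rw [intervalIntegrable_iff]
    refine Integrable.mono' (intervalIntegrable_iff.1 hbound_int) (hD'meas n) ?_
    filter_upwards [haeIcc] with s hs using hD'bound n s hs
  have hdiffsmall : ∀ n, ‖(∫ s in a..b, (fderiv ℝ Φ (s, cn n s)) (1, gn n s))
      - ∫ s in a..b, D' n s‖ ≤ C * (1 / (n + 1)) := by
    intro n
    rw [← intervalIntegral.integral_sub ((hDn_cont n).intervalIntegrable a b) (hD'ii n)]
    have hptw : ∀ s ∈ Icc a b, ‖(fderiv ℝ Φ (s, cn n s)) (1, gn n s) - D' n s‖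
        ≤ C * ‖gn n s - W s‖ := by
      intro s hs
      have h1 : (fderiv ℝ Φ (s, cn n s)) (1, gn n s) - D' n s
          = (fderiv ℝ Φ (s, cn n s)) ((0:ℝ), gn n s - W s) := by
        simp only [hD'def]
        rw [← map_sub]
        congr 1
        simp [Prod.ext_iff]
      rw [h1]
      calc ‖(fderiv ℝ Φ (s, cn n s)) ((0:ℝ), gn n s - W s)‖
          ≤ ‖fderiv ℝ Φ (s, cn n s)‖ * ‖((0:ℝ), gn n s - W s)‖ :=
            ContinuousLinearMap.le_opNorm _ _
        _ ≤ C * ‖gn n s - W s‖ := by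
            refine mul_le_mul (hopnorm n s hs) ?_ (norm_nonneg _) hC0
            rw [Prod.norm_def]
            simp [max_eq_right (norm_nonneg (gn n s - W s))]
    calc ‖∫ s in a..b, ((fderiv ℝ Φ (s, cn n s)) (1, gn n s) - D' n s)‖
        ≤ ∫ s in a..b, ‖(fderiv ℝ Φ (s, cn n s)) (1, gn n s) - D' n s‖ :=
          intervalIntegral.norm_integral_le_integral_norm hab
      _ ≤ ∫ s in a..b, C * ‖gn n s - W s‖ := by
          refine intervalIntegral.integral_mono_on hab
            (((hDn_cont n).intervalIntegrable a b).sub (hD'ii n)).norm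
            ((((hgn_int n).sub hW).norm.const_mul C).intervalIntegrable) ?_
          intro s hs
          exact hptw s hs
      _ = C * ∫ s in a..b, ‖gn n s - W s‖ := by
          rw [intervalIntegral.integral_const_mul]
      _ ≤ C * (1 / (n + 1)) :=
          mul_le_mul_of_nonneg_left (hInt_close n b (right_mem_Icc.2 hab)) hC0
  -- putting things together
  have hDn_tendsto : Tendsto (fun n => ∫ s in a..b, (fderiv ℝ Φ (s, cn n s)) (1, gn n s))
      atTop (𝓝 (∫ s in a..b, D s)) := by
    have h0 : Tendsto (fun n : ℕ => (∫ s in a..b, (fderiv ℝ Φ (s, cn n s)) (1, gn n s))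
        - ∫ s in a..b, D' n s) atTop (𝓝 0) := by
      refine squeeze_zero_norm (fun n => hdiffsmall n) ?_
      have : Tendsto (fun n : ℕ => C * (1 / (n + 1))) atTop (𝓝 (C * 0)) :=
        tendsto_one_div_add_atTop_nhds_zero_nat.const_mul C
      simpa using this
    have h2 := h0.add hD'tendsto
    simp only [sub_add_cancel, zero_add] at h2
    exact h2
  have hRHS_tendsto : Tendsto (fun n => Φ (b, cn n b) - Φ (a, cn n a)) atTop
      (𝓝 (Φ (b, c b) - Φ (a, c a))) := by
    have hb' : Tendsto (fun n => Φ (b, cn n b)) atTop (𝓝 (Φ (b, c b))) :=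
      (hΦ.continuous.continuousAt.tendsto).comp
        ((tendsto_const_nhds (x := b)).prodMk_nhds (htendsto_cn b (right_mem_Icc.2 hab)))
    have ha' : Tendsto (fun n => Φ (a, cn n a)) atTop (𝓝 (Φ (a, c a))) :=
      (hΦ.continuous.continuousAt.tendsto).comp
        ((tendsto_const_nhds (x := a)).prodMk_nhds (htendsto_cn a (left_mem_Icc.2 hab)))
    exact hb'.sub ha'
  have hkey : (∫ s in a..b, D s) = Φ (b, c b) - Φ (a, c a) := by
    refine tendsto_nhds_unique hDn_tendsto ?_
    have heq : (fun n => ∫ s in a..b, (fderiv ℝ Φ (s, cn n s)) (1, gn n s))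
        = fun n => Φ (b, cn n b) - Φ (a, cn n a) := by
      funext n; exact hFTCn n
    rw [heq]
    exact hRHS_tendsto
  rw [← hkey]
  refine intervalIntegral.integral_congr fun s hs => ?_
  have hs' : s ∈ Icc a b := by rwa [uIcc_of_le hab] at hs
  simp only [hDdef]
  rw [hWeq s hs']


theorem fderiv_phi_exp {d : ℕ} (φ : XX d → ℝ) (hφ : ContDiff ℝ (⊤ : ℕ∞) φ)
    (t : ℝ) (y : Euc d) (a : ℝ) (vv : Euc d) (gg : ℝ) :
    fderiv ℝ (fun p : ℝ × (Euc d × ℝ) => φ (p.1, p.2.1) * Real.exp p.2.2)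
        (t, (y, a)) (1, (vv, gg))
      = (fderiv ℝ φ (t, y) (1, vv) + φ (t, y) * gg) * Real.exp a := by
  set π : (ℝ × (Euc d × ℝ)) →L[ℝ] (ℝ × Euc d) :=
    (ContinuousLinearMap.fst ℝ ℝ (Euc d × ℝ)).prod
      ((ContinuousLinearMap.fst ℝ (Euc d) ℝ).comp (ContinuousLinearMap.snd ℝ ℝ (Euc d × ℝ)))
    with hπ
  set σ : (ℝ × (Euc d × ℝ)) →L[ℝ] ℝ :=
    (ContinuousLinearMap.snd ℝ (Euc d) ℝ).comp (ContinuousLinearMap.snd ℝ ℝ (Euc d × ℝ))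
    with hσ
  have h1 : HasFDerivAt (fun p : ℝ × (Euc d × ℝ) => φ (p.1, p.2.1))
      ((fderiv ℝ φ (t, y)).comp π) (t, (y, a)) := by
    have := ((hφ.differentiable (by norm_num) (t, y)).hasFDerivAt).comp (t, (y, a)) π.hasFDerivAt
    exact this
  have h2 : HasFDerivAt (fun p : ℝ × (Euc d × ℝ) => Real.exp p.2.2)
      (Real.exp a • σ) (t, (y, a)) := by
    have := (Real.hasDerivAt_exp a).comp_hasFDerivAt (t, (y, a)) σ.hasFDerivAt
    exact this
  have h3 := h1.mul h2
  rw [show (fun p : ℝ × (Euc d × ℝ) => φ (p.1, p.2.1) * Real.exp p.2.2) = ((fun p : ℝ × (Euc d × ℝ) => φ (p.1, p.2.1)) * fun p => Real.exp p.2.2) from rfl, h3.fderiv]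
  simp only [ContinuousLinearMap.add_apply, ContinuousLinearMap.smul_apply,
    ContinuousLinearMap.coe_comp', Function.comp_apply, hπ, hσ,
    ContinuousLinearMap.prod_apply, ContinuousLinearMap.coe_fst',
    ContinuousLinearMap.coe_snd', smul_eq_mul]
  ring


/-- **Push-forward representations yield solutions.**
If `v, g` are Borel with `∫₀¹ (sup_x |·| + Lip(·)) dt < ∞`, `ρ₀ ∈ M⁺(ℝ^d)`,
and `X` is the (measurable) flow of `γ' = v(t,γ)` defined beyond some
`t̄ ∈ (0,1]` for `ρ₀`-a.e. starting point, then
`ρ_t = (X_·(t))_# (ρ₀ · e^{∫₀ᵗ g(s,X(s)) ds})` is a narrowly continuous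
distributional solution of `∂ₜ ρ + div (vρ) = gρ` on `(0,t̄) × ℝ^d`. -/

theorem pushforward_is_solution (d : ℕ) (hd : 1 ≤ d)
    (v : XX d → Euc d) (g : XX d → ℝ) (hv : Measurable v) (hg : Measurable g)
    (Cv : ℝ → ℝ) (hCvInt : IntegrableOn Cv (Ioo (0:ℝ) 1))
    (hCv : ∀ t ∈ Icc (0:ℝ) 1, (∀ x : Euc d, ‖v (t, x)‖ ≤ Cv t) ∧
      LipschitzWith (Real.toNNReal (Cv t)) (fun x : Euc d => v (t, x)))
    (Cg : ℝ → ℝ) (hCgInt : IntegrableOn Cg (Ioo (0:ℝ) 1))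
    (hCg : ∀ t ∈ Icc (0:ℝ) 1, (∀ x : Euc d, |g (t, x)| ≤ Cg t) ∧
      LipschitzWith (Real.toNNReal (Cg t)) (fun x : Euc d => g (t, x)))
    (ρ₀ : Measure (Euc d)) (hρ₀ : IsFiniteMeasure ρ₀)
    (X : Euc d → ℝ → Euc d) (hX : Measurable fun p : Euc d × ℝ => X p.1 p.2)
    (tbar : ℝ) (htbar : tbar ∈ Ioc (0:ℝ) 1)
    (hflow : ∀ᵐ x ∂ρ₀, ∀ t ∈ Icc (0:ℝ) tbar,
      X x t = x + ∫ s in (0:ℝ)..t, v (s, X x s)) :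
    ∃ ρ : ℝ → Measure (Euc d),
      (∀ t, ρ t = Measure.map (fun x => X x t)
        (ρ₀.withDensity fun x =>
          ENNReal.ofReal (Real.exp (∫ s in (0:ℝ)..t, g (s, X x s))))) ∧
      (∀ φ : Euc d → ℝ, Continuous φ → (∃ M, ∀ x, |φ x| ≤ M) →
        ContinuousOn (fun t => ∫ x, φ x ∂(ρ t)) (Icc (0:ℝ) tbar)) ∧
      (∀ φ : XX d → ℝ, ContDiff ℝ (⊤ : ℕ∞) φ → HasCompactSupport φ →
        tsupport φ ⊆ Ioo (0:ℝ) tbar ×ˢ (Set.univ : Set (Euc d)) →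
        (∫ t in Ioo (0:ℝ) tbar,
          ∫ x, (fderiv ℝ φ (t, x) (1, v (t, x)) + φ (t, x) * g (t, x)) ∂(ρ t)) = 0) := by
  classical
  obtain ⟨ht0, ht1⟩ := htbar
  -- basic measurability
  have hXx : ∀ x : Euc d, Measurable fun s => X x s := fun x =>
    hX.comp (measurable_const.prodMk measurable_id)
  have hXt : ∀ t : ℝ, Measurable fun x => X x t := fun t =>
    hX.comp (measurable_id.prodMk measurable_const)
  have hvX : ∀ x, Measurable fun s => v (s, X x s) := fun x =>
    hv.comp (measurable_id.prodMk (hXx x))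
  have hgX : ∀ x, Measurable fun s => g (s, X x s) := fun x =>
    hg.comp (measurable_id.prodMk (hXx x))
  have hCvI : IntegrableOn Cv (Icc (0:ℝ) 1) := by
    rwa [integrableOn_Icc_iff_integrableOn_Ioo]
  have hCgI : IntegrableOn Cg (Icc (0:ℝ) 1) := by
    rwa [integrableOn_Icc_iff_integrableOn_Ioo]
  have hvXI : ∀ x, IntegrableOn (fun s => v (s, X x s)) (Icc (0:ℝ) 1) := by
    intro x
    refine Integrable.mono' hCvI.abs ((hvX x).aestronglyMeasurable.restrict) ?_
    filter_upwards [ae_restrict_mem measurableSet_Icc] with s hs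
    exact le_trans ((hCv s hs).1 (X x s)) (le_abs_self _)
  have hgXI : ∀ x, IntegrableOn (fun s => g (s, X x s)) (Icc (0:ℝ) 1) := by
    intro x
    refine Integrable.mono' hCgI.abs ((hgX x).aestronglyMeasurable.restrict) ?_
    filter_upwards [ae_restrict_mem measurableSet_Icc] with s hs
    rw [Real.norm_eq_abs]
    exact le_trans ((hCg s hs).1 (X x s)) (le_abs_self _)
  set G : Euc d → ℝ → ℝ := fun x t => ∫ s in (0:ℝ)..t, g (s, X x s) with hGdef
  set K : ℝ := ∫ s in Icc (0:ℝ) 1, |Cg s| with hK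
  have hGle : ∀ (x : Euc d) (t : ℝ), t ∈ Icc (0:ℝ) 1 → G x t ≤ K := by
    intro x t ht
    have h1 : G x t = ∫ s in Ioc (0:ℝ) t, g (s, X x s) :=
      intervalIntegral.integral_of_le ht.1
    have hsub : Ioc (0:ℝ) t ⊆ Icc (0:ℝ) 1 := fun s hs => ⟨hs.1.le, hs.2.trans ht.2⟩
    rw [h1]
    calc (∫ s in Ioc (0:ℝ) t, g (s, X x s)) ≤ ∫ s in Ioc (0:ℝ) t, |Cg s| := by
          refine setIntegral_mono_on ((hgXI x).mono_set hsub) (IntegrableOn.mono_set hCgI.abs hsub)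
            measurableSet_Ioc ?_
          intro s hs
          exact le_trans (le_trans (le_abs_self _) ((hCg s (hsub hs)).1 (X x s)))
            (le_abs_self _)
      _ ≤ K := by
          rw [hK]
          exact setIntegral_mono_set hCgI.abs
            (Eventually.of_forall fun s => abs_nonneg _)
            (HasSubset.Subset.eventuallyLE hsub)
  have hGm : ∀ t : ℝ, 0 ≤ t → Measurable fun x => G x t := by
    intro t ht
    have h1 : (fun x => G x t) = fun x => ∫ s in Ioc (0:ℝ) t, g (s, X x s) := by
      funext x; exact intervalIntegral.integral_of_le ht
    rw [h1]
    have h2 : StronglyMeasurable fun p : Euc d × ℝ => g (p.2, X p.1 p.2) :=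
      (hg.comp (measurable_snd.prodMk hX)).stronglyMeasurable
    exact h2.integral_prod_right'.measurable
  have hB : ∀ t : ℝ, 0 ≤ t → ∀ f : Euc d → ℝ, Measurable f →
      (∫ y, f y ∂(Measure.map (fun x => X x t)
        (ρ₀.withDensity fun x => ENNReal.ofReal (Real.exp (G x t)))))
      = ∫ x, f (X x t) * Real.exp (G x t) ∂ρ₀ := by
    intro t ht f hf
    have hGt := hGm t ht
    rw [integral_map (hXt t).aemeasurable hf.aestronglyMeasurable]
    have hd : Measurable fun x => (Real.exp (G x t)).toNNReal :=
      (Real.measurable_exp.comp hGt).real_toNNReal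
    have hwd : (ρ₀.withDensity fun x => ENNReal.ofReal (Real.exp (G x t)))
        = ρ₀.withDensity fun x => ((Real.exp (G x t)).toNNReal : ℝ≥0∞) := rfl
    rw [hwd, integral_withDensity_eq_integral_smul hd]
    refine integral_congr_ae (Eventually.of_forall fun x => ?_)
    show (Real.exp (G x t)).toNNReal • f (X x t) = f (X x t) * Real.exp (G x t)
    rw [NNReal.smul_def, Real.coe_toNNReal _ (Real.exp_nonneg _), mul_comm, smul_eq_mul]
  refine ⟨fun t => Measure.map (fun x => X x t)
    (ρ₀.withDensity fun x => ENNReal.ofReal (Real.exp (G x t))), fun t => rfl, ?_, ?_⟩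
  · -- narrow continuity
    rintro φ hφc ⟨M, hM⟩
    have hM0 : 0 ≤ M := le_trans (abs_nonneg _) (hM 0)
    have hrw : EqOn (fun t => ∫ x, φ x ∂(Measure.map (fun x => X x t)
        (ρ₀.withDensity fun x => ENNReal.ofReal (Real.exp (G x t)))))
        (fun t => ∫ x, φ (X x t) * Real.exp (G x t) ∂ρ₀) (Icc (0:ℝ) tbar) :=
      fun t ht => hB t ht.1 φ hφc.measurable
    refine ContinuousOn.congr ?_ hrw
    intro t₀ ht₀
    refine continuousWithinAt_of_dominated (bound := fun _ : Euc d => M * Real.exp K) ?_ ?_ ?_ ?_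
    · refine eventually_nhdsWithin_of_forall (fun t ht => ?_)
      exact ((hφc.measurable.comp (hXt t)).mul
        (Real.measurable_exp.comp (hGm t ht.1))).aestronglyMeasurable
    · refine eventually_nhdsWithin_of_forall (fun t ht => ?_)
      refine Eventually.of_forall fun x => ?_
      have h2 : Real.exp (G x t) ≤ Real.exp K :=
        Real.exp_le_exp.2 (hGle x t ⟨ht.1, ht.2.trans ht1⟩)
      calc ‖φ (X x t) * Real.exp (G x t)‖ = |φ (X x t)| * Real.exp (G x t) := by
            rw [Real.norm_eq_abs, abs_mul, abs_of_nonneg (Real.exp_nonneg _)]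
        _ ≤ M * Real.exp K := mul_le_mul (hM _) h2 (Real.exp_nonneg _) hM0
    · exact integrable_const _
    · filter_upwards [hflow] with x hx
      have hvint : IntegrableOn (fun s => v (s, X x s)) (Icc (0:ℝ) tbar) :=
        (hvXI x).mono_set (Icc_subset_Icc le_rfl ht1)
      have hgint : IntegrableOn (fun s => g (s, X x s)) (Icc (0:ℝ) tbar) :=
        (hgXI x).mono_set (Icc_subset_Icc le_rfl ht1)
      have hXc : ContinuousOn (fun t => X x t) (Icc (0:ℝ) tbar) := by
        have hP : ContinuousOn (fun t => x + ∫ s in Ioc (0:ℝ) t, v (s, X x s))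
            (Icc (0:ℝ) tbar) :=
          (continuous_const.continuousOn).add (intervalIntegral.continuousOn_primitive hvint)
        refine hP.congr ?_
        intro t ht
        show X x t = x + ∫ s in Ioc (0:ℝ) t, v (s, X x s)
        rw [hx t ht, intervalIntegral.integral_of_le ht.1]
      have hGc : ContinuousOn (fun t => G x t) (Icc (0:ℝ) tbar) := by
        have hP : ContinuousOn (fun t => ∫ s in Ioc (0:ℝ) t, g (s, X x s))
            (Icc (0:ℝ) tbar) := intervalIntegral.continuousOn_primitive hgint
        refine hP.congr ?_
        intro t ht
        exact intervalIntegral.integral_of_le ht.1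
      exact ((hφc.comp_continuousOn hXc).mul
        (Real.continuous_exp.comp_continuousOn hGc)) t₀ ht₀
  · -- distributional solution
    intro φ hφ hφsupp hφsub
    have hφ1 : ContDiff ℝ 1 φ := hφ.of_le (by norm_num)
    have hfdc : Continuous (fderiv ℝ φ) := hφ.continuous_fderiv (by simp)
    have hevalm : Measurable fun r : XX d × XX d => (fderiv ℝ φ r.1) r.2 :=
      ((isBoundedBilinearMap_apply (𝕜 := ℝ) (E := XX d) (F := ℝ)).continuous.comp
        ((hfdc.comp continuous_fst).prodMk continuous_snd)).measurable
    obtain ⟨Mφ, hMφ⟩ := hφ.continuous.bounded_above_of_compact_support hφsupp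
    obtain ⟨Mfd, hMfd⟩ := hfdc.bounded_above_of_compact_support (hφsupp.fderiv (𝕜 := ℝ))
    have hMφ0 : 0 ≤ Mφ := le_trans (norm_nonneg _) (hMφ (0, 0))
    have hMfd0 : 0 ≤ Mfd := le_trans (norm_nonneg _) (hMfd (0, 0))
    set I : ℝ → Euc d → ℝ := fun t x =>
      (fderiv ℝ φ (t, X x t) (1, v (t, X x t)) + φ (t, X x t) * g (t, X x t))
        * Real.exp (G x t) with hI
    have hinner : EqOn (fun t => ∫ x, (fderiv ℝ φ (t, x) (1, v (t, x)) + φ (t, x) * g (t, x))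
        ∂(Measure.map (fun x => X x t)
          (ρ₀.withDensity fun x => ENNReal.ofReal (Real.exp (G x t)))))
        (fun t => ∫ x, I t x ∂ρ₀) (Ioo (0:ℝ) tbar) := by
      intro t ht
      have hfmeas : Measurable fun y : Euc d =>
          fderiv ℝ φ (t, y) (1, v (t, y)) + φ (t, y) * g (t, y) := by
        have h1 : Measurable fun y : Euc d => fderiv ℝ φ (t, y) (1, v (t, y)) := by
          have hp : Measurable fun y : Euc d =>
              (((t, y) : XX d), (((1:ℝ), v (t, y)) : XX d)) :=
            (measurable_const.prodMk measurable_id).prodMk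
              (measurable_const.prodMk (hv.comp ((Continuous.prodMk_right t).measurable)))
          exact hevalm.comp hp
        exact h1.add ((hφ.continuous.measurable.comp ((Continuous.prodMk_right t).measurable)).mul
          (hg.comp ((Continuous.prodMk_right t).measurable)))
      exact hB t ht.1.le _ hfmeas
    rw [setIntegral_congr_fun measurableSet_Ioo hinner]
    -- joint measurability via Gbig
    have hXj : Measurable fun p : ℝ × Euc d => X p.2 p.1 := hX.comp measurable_swap
    set Gbig : ℝ × Euc d → ℝ :=
      fun q => ∫ s, (Ioc (0:ℝ) q.1).indicator (fun s => g (s, X q.2 s)) s with hGbig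
    have hGbigm : Measurable Gbig := by
      have h2 : Measurable fun r : (ℝ × Euc d) × ℝ =>
          (Ioc (0:ℝ) r.1.1).indicator (fun s => g (s, X r.1.2 s)) r.2 := by
        have he : (fun r : (ℝ × Euc d) × ℝ =>
            (Ioc (0:ℝ) r.1.1).indicator (fun s => g (s, X r.1.2 s)) r.2)
            = fun r : (ℝ × Euc d) × ℝ =>
              if r.2 ∈ Ioc (0:ℝ) r.1.1 then g (r.2, X r.1.2 r.2) else 0 := by
          funext r
          simp [Set.indicator_apply]
        rw [he]
        refine Measurable.ite ?_ ?_ measurable_const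
        · have hset : {r : (ℝ × Euc d) × ℝ | r.2 ∈ Ioc (0:ℝ) r.1.1}
              = {r : (ℝ × Euc d) × ℝ | (0:ℝ) < r.2} ∩ {r : (ℝ × Euc d) × ℝ | r.2 ≤ r.1.1} := by
            ext r; exact Iff.rfl
          rw [hset]
          exact (measurableSet_lt measurable_const measurable_snd).inter
            (measurableSet_le measurable_snd (measurable_fst.comp measurable_fst))
        · exact hg.comp (measurable_snd.prodMk
            (hX.comp ((measurable_snd.comp measurable_fst).prodMk measurable_snd)))
      exact (h2.stronglyMeasurable.integral_prod_right').measurable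
    have hGbig_eq : ∀ t : ℝ, 0 ≤ t → ∀ x, G x t = Gbig (t, x) := by
      intro t ht x
      simp only [hGbig, hGdef]
      rw [intervalIntegral.integral_of_le ht, ← integral_indicator measurableSet_Ioc]
    -- Fubini
    have hIint : Integrable (Function.uncurry I)
        ((volume.restrict (Ioo (0:ℝ) tbar)).prod ρ₀) := by
      have hpair : Measurable fun p : ℝ × Euc d => (p.1, X p.2 p.1) :=
        measurable_fst.prodMk hXj
      have hI'm : Measurable fun p : ℝ × Euc d =>
          (fderiv ℝ φ (p.1, X p.2 p.1) (1, v (p.1, X p.2 p.1))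
            + φ (p.1, X p.2 p.1) * g (p.1, X p.2 p.1)) * Real.exp (Gbig p) := by
        have hfd : Measurable fun p : ℝ × Euc d =>
            fderiv ℝ φ (p.1, X p.2 p.1) (1, v (p.1, X p.2 p.1)) := by
          have hp : Measurable fun p : ℝ × Euc d =>
              (((p.1, X p.2 p.1) : XX d), (((1:ℝ), v (p.1, X p.2 p.1)) : XX d)) :=
            hpair.prodMk (measurable_const.prodMk (hv.comp hpair))
          exact hevalm.comp hp
        exact (hfd.add ((hφ.continuous.measurable.comp hpair).mul (hg.comp hpair))).mul
          (Real.measurable_exp.comp hGbigm)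
      have haet : ∀ᵐ p ∂((volume.restrict (Ioo (0:ℝ) tbar)).prod ρ₀),
          p.1 ∈ Ioo (0:ℝ) tbar := by
        refine ae_iff.2 ?_
        have hseteq : {p : ℝ × Euc d | ¬ p.1 ∈ Ioo (0:ℝ) tbar}
            = (Ioo (0:ℝ) tbar)ᶜ ×ˢ (univ : Set (Euc d)) := by
          ext p; simp [Set.mem_prod]
        rw [hseteq, Measure.prod_prod]
        have h0 : (volume.restrict (Ioo (0:ℝ) tbar)) (Ioo (0:ℝ) tbar)ᶜ = 0 := by
          rw [Measure.restrict_apply (measurableSet_Ioo.compl)]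
          simp
        rw [h0, zero_mul]
      have haesm : AEStronglyMeasurable (Function.uncurry I)
          ((volume.restrict (Ioo (0:ℝ) tbar)).prod ρ₀) := by
        refine (hI'm.aestronglyMeasurable).congr ?_
        filter_upwards [haet] with p hp
        simp only [Function.uncurry, hI]
        rw [← hGbig_eq p.1 hp.1.le p.2]
      set bb : ℝ → ℝ := fun t => (Mfd * (1 + |Cv t|) + Mφ * |Cg t|) * Real.exp K with hbb
      have hbbint : Integrable bb (volume.restrict (Ioo (0:ℝ) tbar)) := by
        have h1 : IntegrableOn (fun _ : ℝ => (1:ℝ)) (Ioo (0:ℝ) tbar) :=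
          integrableOn_const measure_Ioo_lt_top.ne
        have hCv2 : IntegrableOn (fun t => |Cv t|) (Ioo (0:ℝ) tbar) :=
          IntegrableOn.mono_set (hCvI.abs) (fun s hs => ⟨hs.1.le, hs.2.le.trans ht1⟩)
        have hCg2 : IntegrableOn (fun t => |Cg t|) (Ioo (0:ℝ) tbar) :=
          IntegrableOn.mono_set (hCgI.abs) (fun s hs => ⟨hs.1.le, hs.2.le.trans ht1⟩)
        exact ((((h1.add hCv2).const_mul Mfd).add (hCg2.const_mul Mφ)).mul_const _)
      have hbbprod : Integrable (fun p : ℝ × Euc d => bb p.1)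
          ((volume.restrict (Ioo (0:ℝ) tbar)).prod ρ₀) := by
        have := hbbint.mul_prod (integrable_const (1:ℝ) (μ := ρ₀))
        simpa using this
      refine Integrable.mono' hbbprod haesm ?_
      filter_upwards [haet] with p hp
      have hp1 : p.1 ∈ Icc (0:ℝ) 1 := ⟨hp.1.le, hp.2.le.trans ht1⟩
      have hvb : ‖v (p.1, X p.2 p.1)‖ ≤ |Cv p.1| :=
        le_trans ((hCv p.1 hp1).1 _) (le_abs_self _)
      have hgb : |g (p.1, X p.2 p.1)| ≤ |Cg p.1| :=
        le_trans ((hCg p.1 hp1).1 _) (le_abs_self _)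
      have hpn : ‖(((1:ℝ), v (p.1, X p.2 p.1)) : ℝ × Euc d)‖ ≤ 1 + |Cv p.1| := by
        rw [Prod.norm_def]
        simp only [norm_one]
        exact max_le (by linarith [abs_nonneg (Cv p.1)]) (by linarith)
      have hfdb : |fderiv ℝ φ (p.1, X p.2 p.1) (1, v (p.1, X p.2 p.1))|
          ≤ Mfd * (1 + |Cv p.1|) := by
        rw [← Real.norm_eq_abs]
        calc ‖fderiv ℝ φ (p.1, X p.2 p.1) (1, v (p.1, X p.2 p.1))‖
            ≤ ‖fderiv ℝ φ (p.1, X p.2 p.1)‖ * ‖(((1:ℝ), v (p.1, X p.2 p.1)) : ℝ × Euc d)‖ :=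
              ContinuousLinearMap.le_opNorm _ _
          _ ≤ Mfd * (1 + |Cv p.1|) :=
              mul_le_mul (hMfd _) hpn (norm_nonneg _) hMfd0
      have hφb : |φ (p.1, X p.2 p.1) * g (p.1, X p.2 p.1)| ≤ Mφ * |Cg p.1| := by
        rw [abs_mul]
        refine mul_le_mul ?_ hgb (abs_nonneg _) hMφ0
        rw [← Real.norm_eq_abs]; exact hMφ _
      have hexpb : Real.exp (G p.2 p.1) ≤ Real.exp K :=
        Real.exp_le_exp.2 (hGle p.2 p.1 hp1)
      calc ‖Function.uncurry I p‖
          = |fderiv ℝ φ (p.1, X p.2 p.1) (1, v (p.1, X p.2 p.1))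
              + φ (p.1, X p.2 p.1) * g (p.1, X p.2 p.1)| * Real.exp (G p.2 p.1) := by
            simp only [Function.uncurry, hI]
            rw [Real.norm_eq_abs, abs_mul, abs_of_nonneg (Real.exp_nonneg _)]
        _ ≤ (Mfd * (1 + |Cv p.1|) + Mφ * |Cg p.1|) * Real.exp K := by
            refine mul_le_mul (le_trans (abs_add_le _ _) (add_le_add hfdb hφb)) hexpb
              (Real.exp_nonneg _) ?_
            have : (0:ℝ) ≤ Mfd * (1 + |Cv p.1|) :=
              mul_nonneg hMfd0 (by linarith [abs_nonneg (Cv p.1)])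
            have h2 : (0:ℝ) ≤ Mφ * |Cg p.1| := mul_nonneg hMφ0 (abs_nonneg _)
            linarith
        _ = bb p.1 := rfl
    rw [integral_integral_swap hIint]
    -- a.e. vanishing of the inner time integral
    have hzero : ∀ᵐ x ∂ρ₀, (∫ t in Ioo (0:ℝ) tbar, I t x) = 0 := by
      filter_upwards [hflow] with x hx
      set w : ℝ → Euc d × ℝ := fun s => (v (s, X x s), g (s, X x s)) with hw
      have hwint : IntegrableOn w (Icc (0:ℝ) tbar) :=
        (((hvXI x).mono_set (Icc_subset_Icc le_rfl ht1))).prodMk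
          (((hgXI x).mono_set (Icc_subset_Icc le_rfl ht1)))
      set c : ℝ → Euc d × ℝ := fun t => ((x, (0:ℝ)) : Euc d × ℝ) + ∫ s in (0:ℝ)..t, w s
        with hc
      have hc0 : ∀ t ∈ Icc (0:ℝ) tbar, c t = c 0 + ∫ s in (0:ℝ)..t, w s := by
        intro t ht
        simp only [hc, intervalIntegral.integral_same, add_zero]
      set Φ : ℝ × (Euc d × ℝ) → ℝ := fun p => φ (p.1, p.2.1) * Real.exp p.2.2 with hΦ
      have hΦc : ContDiff ℝ 1 Φ := by
        refine ContDiff.mul ?_ ?_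
        · exact hφ1.comp ((contDiff_fst).prodMk ((contDiff_fst).comp (contDiff_snd)))
        · exact (Real.contDiff_exp.of_le le_top).comp ((contDiff_snd).comp (contDiff_snd))
      have hcomp : ∀ t ∈ Icc (0:ℝ) tbar, c t = (X x t, G x t) := by
        intro t ht
        have hii : IntervalIntegrable w volume 0 t := by
          rw [intervalIntegrable_iff_integrableOn_Ioc_of_le ht.1]
          exact (hwint.mono_set (Icc_subset_Icc le_rfl ht.2)).mono_set Ioc_subset_Icc_self
        have h1 : (∫ s in (0:ℝ)..t, w s).1 = ∫ s in (0:ℝ)..t, v (s, X x s) := by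
          have := (ContinuousLinearMap.fst ℝ (Euc d) ℝ).intervalIntegral_comp_comm hii
          exact this.symm
        have h2 : (∫ s in (0:ℝ)..t, w s).2 = ∫ s in (0:ℝ)..t, g (s, X x s) := by
          have := (ContinuousLinearMap.snd ℝ (Euc d) ℝ).intervalIntegral_comp_comm hii
          exact this.symm
        have hXt' := hx t ht
        refine Prod.ext ?_ ?_
        · show x + (∫ s in (0:ℝ)..t, w s).1 = X x t
          rw [h1, ← hXt']
        · show (0:ℝ) + (∫ s in (0:ℝ)..t, w s).2 = G x t
          rw [h2, zero_add]
      have hftc := ftc_chain Φ hΦc 0 tbar ht0.le w hwint c hc0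
      have hφtbar : ∀ y : Euc d, φ (tbar, y) = 0 := by
        intro y
        apply image_eq_zero_of_notMem_tsupport
        intro hmem
        exact lt_irrefl tbar (hφsub hmem).1.2
      have hφzero : ∀ y : Euc d, φ ((0:ℝ), y) = 0 := by
        intro y
        apply image_eq_zero_of_notMem_tsupport
        intro hmem
        exact lt_irrefl (0:ℝ) (hφsub hmem).1.1
      have hIoo : (∫ t in Ioo (0:ℝ) tbar, I t x) = ∫ t in (0:ℝ)..tbar, I t x := by
        rw [intervalIntegral.integral_of_le ht0.le, integral_Ioc_eq_integral_Ioo]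
      rw [hIoo]
      have hcongr : (∫ t in (0:ℝ)..tbar, I t x)
          = ∫ s in (0:ℝ)..tbar, (fderiv ℝ Φ (s, c s)) (1, w s) := by
        refine intervalIntegral.integral_congr fun s hs => ?_
        have hs' : s ∈ Icc (0:ℝ) tbar := by rwa [uIcc_of_le ht0.le] at hs
        rw [hcomp s hs']
        have hfe := fderiv_phi_exp φ hφ s (X x s) (G x s) (v (s, X x s)) (g (s, X x s))
        simp only [hI, hΦ, hw]
        rw [hfe]
      rw [hcongr, hftc]
      have e1 : Φ (tbar, c tbar) = 0 := by
        simp only [hΦ]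
        rw [hφtbar]
        ring
      have e2 : Φ (0, c 0) = 0 := by
        simp only [hΦ]
        rw [hφzero]
        ring
      rw [e1, e2, sub_zero]
    calc (∫ x, (∫ t in Ioo (0:ℝ) tbar, I t x) ∂ρ₀) = ∫ x, (0:ℝ) ∂ρ₀ :=
          integral_congr_ae hzero
      _ = 0 := integral_zero _ _

end Paper
end
end

section
/- Narrow continuity of cone-valued curves: Let V ⊂ ℝ^d be the closure of a bounded domain and ρ_t : [0,1] → 𝒞_V. Then the following are equivalent: (i) t ↦ ρ_t is narrowly continuous; (ii) ρ_t = h(t)δ_{γ(t)} with h ∈ C[0,1] and γ continuous on the set {h > 0} := {t ∈ [0,1] : h(t) > 0}. -/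
open MeasureTheory Set Filter Topology
open scoped ENNReal NNReal

noncomputable section

namespace Paper

variable {d : ℕ}

/-- Integral of a continuous function against a weighted Dirac mass. -/
lemma integral_weighted_dirac {d : ℕ} (a : ℝ) (ha : 0 ≤ a) (x : Euc d) (φ : Euc d → ℝ) :
    ∫ y, φ y ∂(ENNReal.ofReal a • Measure.dirac x) = a * φ x := by
  rw [integral_smul_measure, integral_dirac, ENNReal.toReal_ofReal ha, smul_eq_mul]

lemma continuousOn_euc {d : ℕ} (v : ℝ → Euc d) (s : Set ℝ)
    (hv : ∀ i : Fin d, ContinuousOn (fun t => v t i) s) : ContinuousOn v s := by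
  have : ContinuousOn (fun t => (EuclideanSpace.equiv (Fin d) ℝ).symm (fun i => v t i)) s :=
    (EuclideanSpace.equiv (Fin d) ℝ).symm.continuous.comp_continuousOn
      (continuousOn_pi.2 hv)
  convert this using 2
  rfl

/-- **Narrow continuity of cone-valued curves.**
A curve `ρ : [0,1] → 𝒞_V` is narrowly continuous iff it can be written as
`ρ_t = h(t) δ_{γ(t)}` with `h` continuous on `[0,1]` and `γ` continuous on
`{h > 0}`. -/
theorem narrow_continuity_cone_curves (d : ℕ) (hd : 1 ≤ d) (V : Set (Euc d))
    (hV : IsClosureOfBoundedDomain V)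
    (ρ : ℝ → Measure (Euc d)) (hcone : ∀ t ∈ Icc (0:ℝ) 1, ρ t ∈ coneSet V) :
    (∀ φ : Euc d → ℝ, Continuous φ →
        ContinuousOn (fun t => ∫ x, φ x ∂(ρ t)) (Icc (0:ℝ) 1)) ↔
    (∃ (h : ℝ → ℝ) (γ : ℝ → Euc d),
      (∀ t ∈ Icc (0:ℝ) 1, 0 ≤ h t ∧ γ t ∈ V ∧
        ρ t = ENNReal.ofReal (h t) • Measure.dirac (γ t)) ∧
      ContinuousOn h (Icc (0:ℝ) 1) ∧
      ContinuousOn γ {t | t ∈ Icc (0:ℝ) 1 ∧ 0 < h t}) := by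
  -- V is compact and nonempty
  obtain ⟨U, hUopen, hUne, -, hUbdd, hUV⟩ := hV
  have hVcomp : IsCompact V := by
    rw [hUV]; exact hUbdd.isCompact_closure
  have hVne : V.Nonempty := hUne.mono (hUV ▸ subset_closure)
  obtain ⟨v0, hv0⟩ := hVne
  constructor
  · intro hnarrow
    classical
    set h : ℝ → ℝ := fun t => (ρ t Set.univ).toReal with hh
    set γ : ℝ → Euc d := fun t =>
      if H : ρ t ∈ coneSet V then H.choose_spec.choose else v0 with hγ
    -- the representation on Icc
    have hrep : ∀ t ∈ Icc (0:ℝ) 1, 0 ≤ h t ∧ γ t ∈ V ∧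
        ρ t = ENNReal.ofReal (h t) • Measure.dirac (γ t) := by
      intro t ht
      have H : ρ t ∈ coneSet V := hcone t ht
      obtain ⟨ha, hxV, heq⟩ := H.choose_spec.choose_spec
      have hγt : γ t = H.choose_spec.choose := by simp [hγ, H]
      have hmass : ρ t Set.univ = ENNReal.ofReal H.choose := by
        have := congrArg (fun μ : Measure (Euc d) => μ Set.univ) heq
        simpa [Measure.smul_apply] using this
      have hht : h t = H.choose := by
        simp only [hh]; rw [hmass, ENNReal.toReal_ofReal ha]
      refine ⟨by rw [hht]; exact ha, by rw [hγt]; exact hxV, ?_⟩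
      rw [hht, hγt]; exact heq
    have hhcont : ContinuousOn h (Icc (0:ℝ) 1) := by
      have := hnarrow (fun _ => (1:ℝ)) continuous_const
      refine this.congr fun t ht => ?_
      obtain ⟨ha, -, heq⟩ := hrep t ht
      beta_reduce
      rw [heq, integral_weighted_dirac _ ha, mul_one]
    refine ⟨h, γ, hrep, hhcont, ?_⟩
    -- continuity of γ on {h > 0}
    have hFi : ∀ i : Fin d, ContinuousOn (fun t => ∫ x, x i ∂(ρ t)) (Icc (0:ℝ) 1) :=
      fun i => hnarrow (fun x => x i) (EuclideanSpace.proj (𝕜 := ℝ) i).continuous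
    have hsub : {t | t ∈ Icc (0:ℝ) 1 ∧ 0 < h t} ⊆ Icc (0:ℝ) 1 := fun t ht => ht.1
    refine continuousOn_euc γ _ fun i => ?_
    have hdiv : ContinuousOn (fun t => (∫ x, x i ∂(ρ t)) / h t)
        {t | t ∈ Icc (0:ℝ) 1 ∧ 0 < h t} :=
      ((hFi i).mono hsub).div (hhcont.mono hsub) fun t ht => ne_of_gt ht.2
    refine hdiv.congr fun t ht => ?_
    obtain ⟨ha, -, heq⟩ := hrep t ht.1
    beta_reduce
    rw [heq, integral_weighted_dirac _ ha]
    rw [mul_div_cancel_left₀ _ (ne_of_gt ht.2)]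
  · rintro ⟨h, γ, hrep, hhcont, hγcont⟩
    intro φ hφ
    -- bound on φ over V
    obtain ⟨C0, hC0⟩ := hVcomp.exists_bound_of_continuousOn hφ.continuousOn
    set C := max C0 0 with hC
    have hCb : ∀ x ∈ V, ‖φ x‖ ≤ C := fun x hx => (hC0 x hx).trans (le_max_left _ _)
    have hkey : ∀ t ∈ Icc (0:ℝ) 1, ∫ x, φ x ∂(ρ t) = h t * φ (γ t) := by
      intro t ht
      obtain ⟨ha, -, heq⟩ := hrep t ht
      rw [heq, integral_weighted_dirac _ ha]
    have hgoal : ContinuousOn (fun t => h t * φ (γ t)) (Icc (0:ℝ) 1) := by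
      intro t0 ht0
      by_cases hpos : 0 < h t0
      · -- the positivity set is a relative neighbourhood of t0
        have hmem : {t | t ∈ Icc (0:ℝ) 1 ∧ 0 < h t} ∈ 𝓝[Icc (0:ℝ) 1] t0 := by
          have h1 : h ⁻¹' (Ioi 0) ∈ 𝓝[Icc (0:ℝ) 1] t0 :=
            (hhcont t0 ht0) (Ioi_mem_nhds hpos)
          exact Filter.mem_of_superset (Filter.inter_mem self_mem_nhdsWithin h1)
            fun t htm => ⟨htm.1, htm.2⟩
        have hcontS : ContinuousOn (fun t => h t * φ (γ t))
            {t | t ∈ Icc (0:ℝ) 1 ∧ 0 < h t} :=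
          (hhcont.mono fun t ht => ht.1).mul (hφ.comp_continuousOn hγcont)
        exact (hcontS t0 ⟨ht0, hpos⟩).mono_left (nhdsWithin_le_of_mem hmem)
      · -- h t0 = 0 : squeeze
        have hzero : h t0 = 0 := le_antisymm (not_lt.1 hpos) (hrep t0 ht0).1
        have hfz : h t0 * φ (γ t0) = 0 := by rw [hzero, zero_mul]
        rw [ContinuousWithinAt, hfz]
        have htend : Tendsto (fun t => C * h t) (𝓝[Icc (0:ℝ) 1] t0) (𝓝 0) := by
          have h2 : Tendsto (fun t => C * h t) (𝓝[Icc (0:ℝ) 1] t0) (𝓝 (C * h t0)) :=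
            (hhcont t0 ht0).const_smul C
          simpa [hzero] using h2
        refine squeeze_zero_norm' ?_ htend
        filter_upwards [self_mem_nhdsWithin] with t ht
        have h0 := (hrep t ht).1
        calc ‖h t * φ (γ t)‖ = h t * ‖φ (γ t)‖ := by
              rw [norm_mul, Real.norm_of_nonneg h0]
          _ ≤ h t * C := mul_le_mul_of_nonneg_left (hCb _ (hrep t ht).2.1) h0
          _ = C * h t := mul_comm _ _
    exact hgoal.congr hkey

end Paper
end
end

section
/- Measurability and continuity of evaluation functionals: Let V ⊂ ℝ^d be the closure of a bounded domain and φ : V × [0,∞) → ℝ satisfy φ(γ,0) = 0 for all γ ∈ V. For t ∈ [0,1] define Ψ_t : 𝒮_V → ℝ by Ψ_t(ρ) := φ(γ(t), h(t)) where ρ_t = h(t)δ_{γ(t)}. If φ is Borel measurable (respectively continuous), then Ψ_t is Borel measurable (respectively continuous) on (𝒮_V, D). -/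
open MeasureTheory Set Filter Topology
open scoped ENNReal NNReal

noncomputable section

namespace Paper

variable {d : ℕ}

section EvalAux

variable {d : ℕ} {V : Set (Euc d)}

lemma cone_integral (a : ℝ) (ha : 0 ≤ a) (x : Euc d) (ψ : Euc d → ℝ) :
    ∫ z, ψ z ∂((ENNReal.ofReal a) • Measure.dirac x) = a * ψ x := by
  rw [integral_smul_measure, integral_dirac, smul_eq_mul, ENNReal.toReal_ofReal ha]

lemma cone_mass (a : ℝ) (x : Euc d) :
    ((ENNReal.ofReal a) • Measure.dirac x) Set.univ = ENNReal.ofReal a := by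
  simp [Measure.smul_apply]

/-- The admissible set defining the flat distance. -/
def flatSet (μ ν : Measure (Euc d)) : Set ℝ :=
  {r : ℝ | ∃ φ : Euc d → ℝ, Continuous φ ∧ (∀ x, |φ x| ≤ 1) ∧ LipschitzWith 1 φ ∧
        r = (∫ x, φ x ∂μ) - ∫ x, φ x ∂ν}

lemma flatDist_eq_sSup (μ ν : Measure (Euc d)) : flatDist μ ν = sSup (flatSet μ ν) := rfl

lemma flatSet_nonempty (μ ν : Measure (Euc d)) : (flatSet μ ν).Nonempty :=
  ⟨0, fun _ => 0, continuous_const, fun x => by simp,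
    (LipschitzWith.const 0).weaken zero_le_one, by simp⟩

lemma flatSet_bddAbove {a b : ℝ} (ha : 0 ≤ a) (hb : 0 ≤ b) (x y : Euc d) :
    ∀ r ∈ flatSet (ENNReal.ofReal a • Measure.dirac x) (ENNReal.ofReal b • Measure.dirac y),
      r ≤ a + b := by
  rintro r ⟨ψ, hc, h1, hlip, rfl⟩
  rw [cone_integral a ha, cone_integral b hb]
  have hx1 := (abs_le.mp (h1 x)).2
  have hy1 := (abs_le.mp (h1 y)).1
  nlinarith

lemma le_flatDist {a b : ℝ} (ha : 0 ≤ a) (hb : 0 ≤ b) (x y : Euc d)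
    (ψ : Euc d → ℝ) (hc : Continuous ψ) (h1 : ∀ z, |ψ z| ≤ 1) (hlip : LipschitzWith 1 ψ) :
    a * ψ x - b * ψ y ≤
      flatDist (ENNReal.ofReal a • Measure.dirac x) (ENNReal.ofReal b • Measure.dirac y) := by
  rw [flatDist_eq_sSup]
  apply le_csSup ⟨a + b, fun r hr => flatSet_bddAbove ha hb x y r hr⟩
  exact ⟨ψ, hc, h1, hlip, by rw [cone_integral a ha, cone_integral b hb]⟩

lemma flatDist_le {a b : ℝ} (ha : 0 ≤ a) (hb : 0 ≤ b) (x y : Euc d) :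
    flatDist (ENNReal.ofReal a • Measure.dirac x) (ENNReal.ofReal b • Measure.dirac y)
      ≤ a + b := by
  rw [flatDist_eq_sSup]
  exact csSup_le (flatSet_nonempty _ _) (flatSet_bddAbove ha hb x y)

lemma abs_sub_le_flatDist {a b : ℝ} (ha : 0 ≤ a) (hb : 0 ≤ b) (x y : Euc d) :
    |a - b| ≤
      flatDist (ENNReal.ofReal a • Measure.dirac x) (ENNReal.ofReal b • Measure.dirac y) := by
  rw [abs_sub_le_iff]
  constructor
  · have := le_flatDist ha hb x y (fun _ => 1) continuous_const (fun z => by simp)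
      ((LipschitzWith.const 1).weaken zero_le_one)
    simpa using this
  · have := le_flatDist ha hb x y (fun _ => (-1)) continuous_const (fun z => by simp)
      ((LipschitzWith.const (-1)).weaken zero_le_one)
    have h2 : a * (-1) - b * (-1) = b - a := by ring
    rwa [h2] at this

lemma dist_mul_le_flatDist {a b : ℝ} (ha : 0 ≤ a) (hb : 0 ≤ b) (x y : Euc d) :
    b * min 1 (dist y x) ≤
      flatDist (ENNReal.ofReal a • Measure.dirac x) (ENNReal.ofReal b • Measure.dirac y) := by
  have hlip0 : LipschitzWith 1 (fun z : Euc d => min 1 (dist z x)) := by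
    have := LipschitzWith.min ((LipschitzWith.const (1:ℝ)).weaken zero_le_one)
      (LipschitzWith.dist_left x)
    simpa using this
  have hlip : LipschitzWith 1 (fun z : Euc d => -(min 1 (dist z x))) := by
    have := hlip0.neg
    simpa [Pi.neg_def] using this
  have h1 : ∀ z : Euc d, |(fun z : Euc d => -(min 1 (dist z x))) z| ≤ 1 := by
    intro z
    rw [abs_neg, abs_of_nonneg (le_min zero_le_one dist_nonneg)]
    exact min_le_left _ _
  have hc : Continuous fun z : Euc d => -(min 1 (dist z x)) :=
    (continuous_const.min (continuous_id.dist continuous_const)).neg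
  have := le_flatDist ha hb x y _ hc h1 hlip
  simpa [dist_self] using this

lemma scurve_rep (η : SCurve V) (s : ℝ) : ∃ x ∈ V,
    η.toFun s = ENNReal.ofReal ((η.toFun s Set.univ).toReal) • Measure.dirac x := by
  obtain ⟨a, x, ha, hx, he⟩ := η.cone s
  refine ⟨x, hx, ?_⟩
  rw [he, cone_mass, ENNReal.toReal_ofReal ha]

lemma massR_continuous (η : SCurve V) :
    Continuous fun s => ((η.toFun s) Set.univ).toReal := by
  have h := η.narrow (fun _ => (1:ℝ)) continuous_const
  have heq : (fun s => ∫ x, (1:ℝ) ∂(η.toFun s))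
      = fun s => ((η.toFun s) Set.univ).toReal := by
    funext s; rw [integral_const]; simp; rfl
  rwa [heq] at h

lemma ddSet_bddAbove (η₁ η₂ : SCurve V) :
    BddAbove {r : ℝ | ∃ s ∈ Icc (0:ℝ) 1, r = flatDist (η₁.toFun s) (η₂.toFun s)} := by
  obtain ⟨s₁, _, hmax1⟩ := isCompact_Icc.exists_isMaxOn (⟨0, by norm_num⟩ :
    (Icc (0:ℝ) 1).Nonempty) (massR_continuous η₁).continuousOn
  obtain ⟨s₂, _, hmax2⟩ := isCompact_Icc.exists_isMaxOn (⟨0, by norm_num⟩ :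
    (Icc (0:ℝ) 1).Nonempty) (massR_continuous η₂).continuousOn
  refine ⟨((η₁.toFun s₁) Set.univ).toReal + ((η₂.toFun s₂) Set.univ).toReal, ?_⟩
  rintro r ⟨s, hs, rfl⟩
  obtain ⟨x, hx, he1⟩ := scurve_rep η₁ s
  obtain ⟨y, hy, he2⟩ := scurve_rep η₂ s
  calc flatDist (η₁.toFun s) (η₂.toFun s)
      ≤ ((η₁.toFun s) Set.univ).toReal + ((η₂.toFun s) Set.univ).toReal := by
        have h := flatDist_le (a := ((η₁.toFun s) Set.univ).toReal)
          (b := ((η₂.toFun s) Set.univ).toReal)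
          ENNReal.toReal_nonneg ENNReal.toReal_nonneg x y
        rwa [← he1, ← he2] at h
    _ ≤ _ := add_le_add (hmax1 hs) (hmax2 hs)

lemma flat_le_Ddist (η₁ η₂ : SCurve V) {s : ℝ} (hs : s ∈ Icc (0:ℝ) 1) :
    flatDist (η₁.toFun s) (η₂.toFun s) ≤ Ddist η₁ η₂ :=
  le_csSup (ddSet_bddAbove η₁ η₂) ⟨s, hs, rfl⟩

lemma flatDist_self (μ : Measure (Euc d)) : flatDist μ μ = 0 := by
  rw [flatDist_eq_sSup]
  have hset : flatSet μ μ = {0} := by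
    apply Set.eq_singleton_iff_unique_mem.mpr
    constructor
    · exact ⟨fun _ => 0, continuous_const, fun x => by simp,
        (LipschitzWith.const 0).weaken zero_le_one, by simp⟩
    · rintro r ⟨ψ, _, _, _, rfl⟩; simp
  rw [hset, csSup_singleton]

lemma Ddist_self (η : SCurve V) : Ddist η η = 0 := by
  have hset : {r : ℝ | ∃ s ∈ Icc (0:ℝ) 1, r = flatDist (η.toFun s) (η.toFun s)} = {0} := by
    apply Set.eq_singleton_iff_unique_mem.mpr
    refine ⟨⟨0, ⟨le_refl 0, zero_le_one⟩, (flatDist_self _).symm⟩, ?_⟩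
    rintro r ⟨s, _, rfl⟩; exact flatDist_self _
  show sSup _ = 0
  rw [hset, csSup_singleton]

end EvalAux

/-- **Measurability and continuity of evaluation functionals.**
Let `φ : V × [0,∞) → ℝ` with `φ(·,0) = 0`, and for `t ∈ [0,1]` let
`Ψ : 𝒮_V → ℝ` be defined by `Ψ(ρ) = φ(γ(t), h(t))` where `ρ_t = h(t)δ_{γ(t)}`.
If `φ` is Borel (resp. continuous), then `Ψ` is Borel (resp. continuous) with
respect to `D`. -/
theorem evaluation_measurable_continuous (d : ℕ) (hd : 1 ≤ d) (V : Set (Euc d))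
    (hV : IsClosureOfBoundedDomain V)
    (t : ℝ) (ht : t ∈ Icc (0:ℝ) 1)
    (φ : Euc d × ℝ → ℝ) (hφ0 : ∀ x : Euc d, φ (x, 0) = 0)
    (Ψ : SCurve V → ℝ)
    (hΨ : ∀ (η : SCurve V) (a : ℝ) (x : Euc d), 0 ≤ a → x ∈ V →
      η.toFun t = ENNReal.ofReal a • Measure.dirac x → Ψ η = φ (x, a)) :
    (Measurable φ → Measurable Ψ) ∧
    (Continuous φ → ∀ (η : SCurve V) (ε : ℝ), 0 < ε → ∃ δ > 0,
      ∀ η' : SCurve V, Ddist η η' < δ → |Ψ η' - Ψ η| < ε) := by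
  classical
  obtain ⟨U, hUo, hUne, _, hUb, hVU⟩ := hV
  obtain ⟨x₀, hx₀U⟩ := hUne
  have hx₀ : x₀ ∈ V := hVU ▸ subset_closure hx₀U
  have hVcompact : IsCompact V := by
    rw [hVU]
    exact Metric.isCompact_of_isClosed_isBounded isClosed_closure hUb.closure
  set hm : SCurve V → ℝ := fun η => ((η.toFun t) Set.univ).toReal with hhm
  have hm_nonneg : ∀ η, 0 ≤ hm η := fun η => ENNReal.toReal_nonneg
  have hrep : ∀ η : SCurve V, ∃ x ∈ V,
      η.toFun t = ENNReal.ofReal (hm η) • Measure.dirac x := fun η => scurve_rep η t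
  set γc : SCurve V → Euc d := fun η => (hrep η).choose with hγcdef
  have hγcV : ∀ η, γc η ∈ V := fun η => (hrep η).choose_spec.1
  have hγceq : ∀ η, η.toFun t = ENNReal.ofReal (hm η) • Measure.dirac (γc η) :=
    fun η => (hrep η).choose_spec.2
  have hΨval : ∀ η, Ψ η = φ (γc η, hm η) :=
    fun η => hΨ η (hm η) (γc η) (hm_nonneg η) (hγcV η) (hγceq η)
  -- two quantitative estimates
  have Emass : ∀ η η' : SCurve V, |hm η - hm η'| ≤ Ddist η η' := by
    intro η η'
    calc |hm η - hm η'| ≤ flatDist (η.toFun t) (η'.toFun t) := by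
          rw [hγceq η, hγceq η']
          exact abs_sub_le_flatDist (hm_nonneg η) (hm_nonneg η') (γc η) (γc η')
      _ ≤ Ddist η η' := flat_le_Ddist η η' ht
  have Epos : ∀ η η' : SCurve V,
      hm η' * min 1 (dist (γc η') (γc η)) ≤ Ddist η η' := by
    intro η η'
    calc hm η' * min 1 (dist (γc η') (γc η)) ≤ flatDist (η.toFun t) (η'.toFun t) := by
          rw [hγceq η, hγceq η']
          exact dist_mul_le_flatDist (hm_nonneg η) (hm_nonneg η') (γc η) (γc η')
      _ ≤ Ddist η η' := flat_le_Ddist η η' ht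
  -- key local estimate near a curve with positive mass
  have key : ∀ (η : SCurve V) (r : ℝ), 0 < r → 0 < hm η → ∃ δ > 0, ∀ η' : SCurve V,
      Ddist η η' < δ → 0 < hm η' ∧ |hm η' - hm η| < r ∧ dist (γc η') (γc η) < r := by
    intro η r hr ha
    have hmr1 : (0:ℝ) < min r 1 := lt_min hr one_pos
    refine ⟨min (min (hm η / 2) (min r 1 / 2)) (min r 1 * hm η / 4), by positivity, ?_⟩
    intro η' hD
    have hD1 : Ddist η η' < hm η / 2 :=
      lt_of_lt_of_le hD (le_trans (min_le_left _ _) (min_le_left _ _))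
    have hD2 : Ddist η η' < min r 1 / 2 :=
      lt_of_lt_of_le hD (le_trans (min_le_left _ _) (min_le_right _ _))
    have hD3 : Ddist η η' < min r 1 * hm η / 4 := lt_of_lt_of_le hD (min_le_right _ _)
    have habs : |hm η - hm η'| ≤ Ddist η η' := Emass η η'
    have habs1 := abs_lt.mp (lt_of_le_of_lt habs hD1)
    have hb : hm η / 2 ≤ hm η' := by linarith [habs1.1, habs1.2]
    have hbpos : 0 < hm η' := lt_of_lt_of_le (by positivity) hb
    refine ⟨hbpos, ?_, ?_⟩
    · rw [abs_sub_comm]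
      have := lt_of_le_of_lt habs hD2
      have hm1 : min r 1 ≤ r := min_le_left _ _
      linarith
    · have hmin := Epos η η'
      have hlt : hm η' * min 1 (dist (γc η') (γc η)) < min r 1 * hm η / 4 :=
        lt_of_le_of_lt hmin hD3
      have h2 : min 1 (dist (γc η') (γc η)) < min r 1 / 2 := by
        by_contra hcon
        push_neg at hcon
        have h3 : hm η' * (min r 1 / 2) ≤ hm η' * min 1 (dist (γc η') (γc η)) :=
          mul_le_mul_of_nonneg_left hcon (le_of_lt hbpos)
        nlinarith
      have hm1 : min r 1 ≤ 1 := min_le_right _ _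
      have hmr : min r 1 ≤ r := min_le_left _ _
      have hlt1 : min 1 (dist (γc η') (γc η)) < 1 := by linarith
      have heq : min 1 (dist (γc η') (γc η)) = dist (γc η') (γc η) := by
        rcases le_or_gt 1 (dist (γc η') (γc η)) with h | h
        · rw [min_eq_left h] at hlt1; exact absurd hlt1 (lt_irrefl 1)
        · exact min_eq_right h.le
      rw [heq] at h2
      linarith
  constructor
  · -- measurability
    intro hφm
    letI tS : TopologicalSpace (SCurve V) := Stop V
    haveI hBS : BorelSpace (SCurve V) := ⟨rfl⟩
    have hmc : Continuous hm := by
      rw [continuous_def]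
      intro O hO
      rw [isOpen_iff_forall_mem_open]
      intro η hη
      obtain ⟨ε, hε, hball⟩ := Metric.isOpen_iff.mp hO (hm η) hη
      refine ⟨{η' | Ddist η η' < ε}, ?_, ?_, ?_⟩
      · intro η' hη'
        apply hball
        rw [Metric.mem_ball, Real.dist_eq, abs_sub_comm]
        exact lt_of_le_of_lt (Emass η η') hη'
      · exact TopologicalSpace.isOpen_generateFrom_of_mem ⟨η, ε, hε, rfl⟩
      · show Ddist η η < ε
        rw [Ddist_self]; exact hε
    have hmm : Measurable hm := hmc.measurable
    set γt : SCurve V → Euc d := fun η => if 0 < hm η then γc η else x₀ with hγt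
    have hγtm : Measurable γt := by
      apply measurable_of_isOpen
      intro O hO
      have hset : γt ⁻¹' O =
          {η | 0 < hm η ∧ γc η ∈ O} ∪ ({η | ¬ 0 < hm η} ∩ {η | x₀ ∈ O}) := by
        ext η
        by_cases h : 0 < hm η
        · simp [γt, h]
        · simp only [Set.mem_preimage, Set.mem_union, Set.mem_inter_iff, Set.mem_setOf_eq, γt,
            if_neg h]
          tauto
      rw [hset]
      apply MeasurableSet.union
      · apply IsOpen.measurableSet
        rw [isOpen_iff_forall_mem_open]
        rintro η ⟨hpos, hmem⟩
        obtain ⟨r, hr, hball⟩ := Metric.isOpen_iff.mp hO (γc η) hmem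
        obtain ⟨δ, hδ, hδp⟩ := key η r hr hpos
        refine ⟨{η' | Ddist η η' < δ}, ?_,
          TopologicalSpace.isOpen_generateFrom_of_mem ⟨η, δ, hδ, rfl⟩, ?_⟩
        · intro η' hη'
          obtain ⟨hb, _, hdist⟩ := hδp η' hη'
          exact ⟨hb, hball hdist⟩
        · show Ddist η η < δ
          rw [Ddist_self]; exact hδ
      · apply MeasurableSet.inter
        · have hset2 : {η : SCurve V | ¬ 0 < hm η} = hm ⁻¹' (Set.Iic 0) := by
            ext η; simp [not_lt]
          rw [hset2]
          exact hmm measurableSet_Iic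
        · by_cases hx : x₀ ∈ O
          · simp [hx]
          · simp [hx]
    have hΨeq : Ψ = fun η => φ (γt η, hm η) := by
      funext η
      rw [hΨval η]
      by_cases h : 0 < hm η
      · simp [γt, h]
      · have h0 : hm η = 0 := le_antisymm (not_lt.mp h) (hm_nonneg η)
        simp [γt, h, h0, hφ0]
    rw [hΨeq]
    exact hφm.comp (hγtm.prodMk hmm)
  · -- continuity
    intro hφc η ε hε
    by_cases ha : 0 < hm η
    · obtain ⟨r, hr, hball⟩ := Metric.continuousAt_iff.mp (hφc.continuousAt
        (x := (γc η, hm η))) ε hε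
      obtain ⟨δ, hδ, hδp⟩ := key η r hr ha
      refine ⟨δ, hδ, ?_⟩
      intro η' hη'
      obtain ⟨hb, habs, hdist⟩ := hδp η' hη'
      rw [hΨval η, hΨval η']
      have hdd : dist ((γc η', hm η')) ((γc η, hm η)) < r := by
        rw [Prod.dist_eq]
        apply max_lt hdist
        rw [Real.dist_eq]; exact habs
      have := hball hdd
      rwa [Real.dist_eq] at this
    · have h0 : hm η = 0 := le_antisymm (not_lt.mp ha) (hm_nonneg η)
      have hΨ0 : Ψ η = 0 := by rw [hΨval, h0, hφ0]
      have hble : ∀ η' : SCurve V, hm η' ≤ Ddist η η' := by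
        intro η'
        have := Emass η η'
        rwa [h0, zero_sub, abs_neg, abs_of_nonneg (hm_nonneg η')] at this
      set S : Set (Euc d × ℝ) := (V ×ˢ Icc (0:ℝ) 1) ∩ {p | ε ≤ |φ p|} with hSdef
      have hScomp : IsCompact S := (hVcompact.prod isCompact_Icc).inter_right
        (isClosed_le continuous_const hφc.abs)
      by_cases hSne : S.Nonempty
      · obtain ⟨p₀, hp₀S, hp₀min⟩ := hScomp.exists_isMinOn hSne continuous_snd.continuousOn
        have hp₀pos : 0 < p₀.2 := by
          rcases lt_or_eq_of_le hp₀S.1.2.1 with h | h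
          · exact h
          · exfalso
            have hp : p₀ = (p₀.1, 0) := Prod.ext rfl h.symm
            have := hp₀S.2
            rw [Set.mem_setOf_eq, hp, hφ0] at this
            simp at this
            linarith
        refine ⟨min p₀.2 1, by positivity, ?_⟩
        intro η' hη'
        rw [hΨ0, sub_zero, hΨval η']
        have hb1 : hm η' < min p₀.2 1 := lt_of_le_of_lt (hble η') hη'
        by_contra hcon
        push_neg at hcon
        have hmem : (γc η', hm η') ∈ S :=
          ⟨⟨hγcV η', ⟨hm_nonneg η', le_of_lt (lt_of_lt_of_le hb1 (min_le_right _ _))⟩⟩, hcon⟩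
        have hmin2 : p₀.2 ≤ hm η' := hp₀min hmem
        have : min p₀.2 1 ≤ p₀.2 := min_le_left _ _
        linarith
      · refine ⟨1, one_pos, ?_⟩
        intro η' hη'
        rw [hΨ0, sub_zero, hΨval η']
        by_contra hcon
        push_neg at hcon
        exact hSne ⟨(γc η', hm η'),
          ⟨⟨hγcV η', ⟨hm_nonneg η', le_of_lt (lt_of_le_of_lt (hble η') hη')⟩⟩, hcon⟩⟩

end Paper
end
end
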